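/- arXiv:1210.3229 — 3 statements merged into one kernel-verified Lean document; each statement's English description precedes it below -/
import Mathlib

section
/- (Non-Markovian property of the output interspike-interval stream.) Assume g(s) > 0 for all s ∈ (0, Δ). Then for every integer m ≥ 1 there exists NO function Q : (0, ∞)^m → ℝ such that J_m(t₀, t₁, …, t_m) = Q(t₁, …, t_m) · J_{m−1}(t₀, …, t_{m−1}) for all tuples with t_j > 0 for all j, Σ_{j=0}^{m−1} t_j < Δ, and t_m < τ. Equivalently, on this domain the conditional density J_m / J_{m−1} of the next interspike interval given the preceding m intervals necessarily depends on the earliest interval t₀; hence the output interspike-interval sequence is not a Markov chain of any finite order. -/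
open Real Set Filter MeasureTheory

/-- Conditional ISI density `F t s` given time-to-live `s` of the feedback impulse. -/
noncomputable def F (lam τ t s : ℝ) : ℝ :=
  if 0 < t ∧ t < s then lam ^ 2 * t * Real.exp (-lam * t)
  else if s ≤ t ∧ t ≤ s + τ then
    (1 + lam * s) * Real.exp (-lam * s) * (lam ^ 2 * (t - s) * Real.exp (-lam * (t - s)))
  else 0

/-- Regular part of the stationary time-to-live density. -/
noncomputable def g (lam A B s : ℝ) : ℝ := A + B * Real.exp (2 * lam * s)

/-- Weight of the singular (Dirac) part of the stationary time-to-live distribution. -/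
noncomputable def aC (lam Δ : ℝ) : ℝ :=
  4 * Real.exp (2 * lam * Δ) / ((3 + 2 * lam * Δ) * Real.exp (2 * lam * Δ) + 1)

/-- `T t p q = Σ_{j=p}^{q-1} t_j` (empty sums are `0`). -/
def T {n : ℕ} (t : Fin n → ℝ) (p q : ℕ) : ℝ :=
  ∑ j : Fin n, if p ≤ (j : ℕ) ∧ (j : ℕ) < q then t j else 0

/-- `Ilow lam Δ τ A B i t` is the term `I_i`, `0 ≤ i ≤ m-1`, of the joint ISI density. -/
noncomputable def Ilow (lam Δ τ A B : ℝ) {m : ℕ} (i : ℕ) (t : Fin (m + 1) → ℝ) : ℝ :=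
  (∏ k : Fin (m + 1), if i + 1 ≤ (k : ℕ) then F lam τ (t k) (Δ - T t (i + 1) (k : ℕ)) else 1) *
    ∫ s in T t 0 i..T t 0 (i + 1),
      g lam A B s *
        ∏ k : Fin (m + 1), if (k : ℕ) ≤ i then F lam τ (t k) (s - T t 0 (k : ℕ)) else 1

/-- `Itop lam Δ τ A B t` is the term `I_m` of the joint ISI density. -/
noncomputable def Itop (lam Δ τ A B : ℝ) {m : ℕ} (t : Fin (m + 1) → ℝ) : ℝ :=
  (∫ s in T t 0 m..Δ, g lam A B s * ∏ k : Fin (m + 1), F lam τ (t k) (s - T t 0 (k : ℕ)))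
    + aC lam Δ * ∏ k : Fin (m + 1), F lam τ (t k) (Δ - T t 0 (k : ℕ))

/-- `J lam Δ τ A B t = Σ_{i=0}^{m} I_i(t)`, the joint density of `m+1` consecutive ISIs. -/
noncomputable def J (lam Δ τ A B : ℝ) {m : ℕ} (t : Fin (m + 1) → ℝ) : ℝ :=
  (∑ i ∈ Finset.range m, Ilow lam Δ τ A B i t) + Itop lam Δ τ A B t

lemma intv_congr {f h : ℝ → ℝ} {a b : ℝ} (hab : a ≤ b)
    (heq : ∀ x ∈ Set.Ioo a b, f x = h x) :
    ∫ x in a..b, f x = ∫ x in a..b, h x := by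
  apply intervalIntegral.integral_congr_ae
  have hb : ∀ᵐ (x : ℝ), x ≠ b := by
    refine ae_iff.mpr ?_
    simp [not_ne_iff, Set.setOf_eq_eq_singleton]
  filter_upwards [hb] with x hx hmem
  rw [Set.uIoc_of_le hab] at hmem
  exact heq x ⟨hmem.1, lt_of_le_of_ne hmem.2 hx⟩

lemma intv_integrable_congr {f h : ℝ → ℝ} {a b : ℝ} (hab : a ≤ b)
    (heq : ∀ x ∈ Set.Ioc a b, f x = h x) (hh : Continuous h) :
    IntervalIntegrable f MeasureTheory.volume a b := by
  have H : IntervalIntegrable h MeasureTheory.volume a b := hh.intervalIntegrable a b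
  constructor
  · exact (H.1).congr_fun (fun x hx => (heq x hx).symm) measurableSet_Ioc
  · rw [Set.Ioc_eq_empty (by exact not_lt.mpr hab)]
    exact integrableOn_empty

-- derivative of a function vanishing on an open interval vanishes there

lemma DD {f f' : ℝ → ℝ} {a b : ℝ} (hd : ∀ x, HasDerivAt f (f' x) x)
    (h : ∀ x ∈ Set.Ioo a b, f x = 0) : ∀ x ∈ Set.Ioo a b, f' x = 0 := by
  intro x hx
  have hev : f =ᶠ[nhds x] (fun _ => (0:ℝ)) := by
    filter_upwards [isOpen_Ioo.mem_nhds hx] with y hy using h y hy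
  have h1 : deriv f x = deriv (fun _ => (0:ℝ)) x := hev.deriv_eq
  rw [(hd x).deriv] at h1
  rw [h1]
  simp

lemma F_branch1 {lam τ t s : ℝ} (h1 : 0 < t) (h2 : t < s) :
    F lam τ t s = lam^2 * t * Real.exp (-lam*t) := by
  rw [F, if_pos ⟨h1, h2⟩]

lemma F_branch2 {lam τ t s : ℝ} (h1 : s ≤ t) (h2 : t ≤ s + τ) :
    F lam τ t s = (1 + lam*s) * Real.exp (-lam*s) * (lam^2 * (t-s) * Real.exp (-lam*(t-s))) := by
  rw [F, if_neg, if_pos ⟨h1, h2⟩]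
  rintro ⟨-, hlt⟩
  exact absurd hlt (not_lt.2 h1)

def tg (d last x : ℝ) (N : ℕ) : Fin (N+1) → ℝ :=
  fun k => if (k : ℕ) = 0 then x else if (k : ℕ) = N then last else d

lemma T00 {M : ℕ} (t : Fin M → ℝ) : T t 0 0 = 0 := by
  apply Finset.sum_eq_zero
  intro j _
  rw [if_neg]
  omega

lemma T_tg (d last x : ℝ) (N Q : ℕ) (hQ : Q + 1 ≤ N) :
    T (tg d last x N) 0 (Q+1) = x + (Q : ℝ) * d := by
  rw [T]
  calc (∑ j : Fin (N+1), if 0 ≤ (j:ℕ) ∧ (j:ℕ) < Q+1 then tg d last x N j else 0)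
      = ∑ j : Fin (N+1), (fun jj => if 0 ≤ jj ∧ jj < Q+1 then
          (if jj = 0 then x else if jj = N then last else d) else 0) (j:ℕ) := by
        simp only [tg]
    _ = ∑ jj ∈ Finset.range (N+1), if 0 ≤ jj ∧ jj < Q+1 then
          (if jj = 0 then x else if jj = N then last else d) else 0 :=
        Fin.sum_univ_eq_sum_range (fun jj => if 0 ≤ jj ∧ jj < Q+1 then
          (if jj = 0 then x else if jj = N then last else d) else 0) (N+1)
    _ = ∑ jj ∈ Finset.range (N+1), if jj < Q+1 then
          (if jj = 0 then x else if jj = N then last else d) else 0 := by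
        apply Finset.sum_congr rfl
        intro jj _
        simp
    _ = ∑ jj ∈ Finset.filter (fun jj => jj < Q+1) (Finset.range (N+1)),
          (if jj = 0 then x else if jj = N then last else d) :=
        (Finset.sum_filter _ _).symm
    _ = ∑ jj ∈ Finset.range (Q+1), (if jj = 0 then x else if jj = N then last else d) := by
        congr 1
        ext a
        simp only [Finset.mem_filter, Finset.mem_range]
        omega
    _ = (∑ jj ∈ Finset.range Q, (if jj+1 = 0 then x else if jj+1 = N then last else d))
          + (if 0 = 0 then x else if 0 = N then last else d) := Finset.sum_range_succ' _ _
    _ = (∑ jj ∈ Finset.range Q, d) + x := by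
        have h1 : (∑ jj ∈ Finset.range Q, (if jj+1 = 0 then x else if jj+1 = N then last else d))
            = ∑ jj ∈ Finset.range Q, d := by
          apply Finset.sum_congr rfl
          intro jj hjj
          simp only [Finset.mem_range] at hjj
          rw [if_neg (by omega), if_neg (by omega)]
        rw [h1]
        norm_num
    _ = x + (Q:ℝ)*d := by
        rw [Finset.sum_const, Finset.card_range, nsmul_eq_mul]
        ring

lemma T_tg_indep (d last x y : ℝ) (N p q : ℕ) (hp : 1 ≤ p) :
    T (tg d last x N) p q = T (tg d last y N) p q := by
  apply Finset.sum_congr rfl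
  intro j _
  by_cases hc : p ≤ (j:ℕ) ∧ (j:ℕ) < q
  · rw [if_pos hc, if_pos hc]
    simp only [tg]
    rw [if_neg (by omega : ¬(j:ℕ) = 0), if_neg (by omega : ¬(j:ℕ) = 0)]
  · rw [if_neg hc, if_neg hc]

lemma prod_tg_ite (lam τ d last x : ℝ) (N i : ℕ) (hiN : i ≤ N) (w : ℕ → ℝ) :
    (∏ k : Fin (N+1), if (k:ℕ) ≤ i then F lam τ (tg d last x N k) (w (k:ℕ)) else 1)
    = ∏ kk ∈ Finset.range (i+1),
        F lam τ (if kk = 0 then x else if kk = N then last else d) (w kk) := by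
  calc (∏ k : Fin (N+1), if (k:ℕ) ≤ i then F lam τ (tg d last x N k) (w (k:ℕ)) else 1)
      = ∏ k : Fin (N+1), (fun kk => if kk ≤ i then
          F lam τ (if kk = 0 then x else if kk = N then last else d) (w kk) else 1) (k:ℕ) := by
        simp only [tg]
    _ = ∏ kk ∈ Finset.range (N+1), if kk ≤ i then
          F lam τ (if kk = 0 then x else if kk = N then last else d) (w kk) else 1 :=
        Fin.prod_univ_eq_prod_range (fun kk => if kk ≤ i then
          F lam τ (if kk = 0 then x else if kk = N then last else d) (w kk) else 1) (N+1)
    _ = ∏ kk ∈ Finset.filter (fun kk => kk ≤ i) (Finset.range (N+1)),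
          F lam τ (if kk = 0 then x else if kk = N then last else d) (w kk) :=
        (Finset.prod_filter _ _).symm
    _ = ∏ kk ∈ Finset.range (i+1),
          F lam τ (if kk = 0 then x else if kk = N then last else d) (w kk) := by
        congr 1
        ext a
        simp only [Finset.mem_filter, Finset.mem_range]
        omega

lemma prod_tg_all (lam τ d last x : ℝ) (N : ℕ) (w : ℕ → ℝ) :
    (∏ k : Fin (N+1), F lam τ (tg d last x N k) (w (k:ℕ)))
    = ∏ kk ∈ Finset.range (N+1),
        F lam τ (if kk = 0 then x else if kk = N then last else d) (w kk) := by
  calc (∏ k : Fin (N+1), F lam τ (tg d last x N k) (w (k:ℕ)))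
      = ∏ k : Fin (N+1), (fun kk =>
          F lam τ (if kk = 0 then x else if kk = N then last else d) (w kk)) (k:ℕ) := by
        simp only [tg]
    _ = ∏ kk ∈ Finset.range (N+1),
        F lam τ (if kk = 0 then x else if kk = N then last else d) (w kk) :=
        Fin.prod_univ_eq_prod_range (fun kk =>
          F lam τ (if kk = 0 then x else if kk = N then last else d) (w kk)) (N+1)

lemma hD1 (c a1 a2 a3 s : ℝ) :
    HasDerivAt (fun u : ℝ => a1*(u-c) + a2*(u-c)^2 + a3*(u-c)^3)
      (a1 + 2*a2*(s-c) + 3*a3*(s-c)^2) s := by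
  have h0 : HasDerivAt (fun u : ℝ => u - c) 1 s := (hasDerivAt_id s).sub_const c
  have h := ((h0.const_mul a1).add ((h0.pow 2).const_mul a2)).add ((h0.pow 3).const_mul a3)
  refine h.congr_deriv ?_
  push_cast
  ring

lemma hD2 (lam c b0 b1 b2 s : ℝ) :
    HasDerivAt (fun u : ℝ => Real.exp (2*lam*u) * (b0 + b1*(u-c) + b2*(u-c)^2))
      (Real.exp (2*lam*s) * (2*lam*(b0 + b1*(s-c) + b2*(s-c)^2) + (b1 + 2*b2*(s-c)))) s := by
  have he : HasDerivAt (fun u : ℝ => Real.exp (2*lam*u)) (2*lam*Real.exp (2*lam*s)) s := by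
    have h1 : HasDerivAt (fun u : ℝ => 2*lam*u) (2*lam) s := by
      simpa using (hasDerivAt_id s).const_mul (2*lam)
    simpa [mul_comm] using h1.exp
  have h0 : HasDerivAt (fun u : ℝ => u - c) 1 s := (hasDerivAt_id s).sub_const c
  have hq : HasDerivAt (fun u : ℝ => b0 + b1*(u-c) + b2*(u-c)^2) (b1 + 2*b2*(s-c)) s := by
    have h := ((hasDerivAt_const s b0).add (h0.const_mul b1)).add ((h0.pow 2).const_mul b2)
    refine h.congr_deriv ?_
    push_cast
    ring
  have h := he.mul hq
  refine h.congr_deriv ?_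
  ring

lemma hD3 (a0 a1 a2 a3 a4 s : ℝ) :
    HasDerivAt (fun u : ℝ => a0 + a1*u + a2*u^2 + a3*u^3 + a4*u^4)
      (a1 + 2*a2*s + 3*a3*s^2 + 4*a4*s^3) s := by
  have h0 : HasDerivAt (fun u : ℝ => u) 1 s := hasDerivAt_id s
  have h := ((((hasDerivAt_const s a0).add (h0.const_mul a1)).add
    ((h0.pow 2).const_mul a2)).add ((h0.pow 3).const_mul a3)).add ((h0.pow 4).const_mul a4)
  refine h.congr_deriv ?_
  push_cast
  ring

lemma hD4 (L b0 b1 s : ℝ) :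
    HasDerivAt (fun u : ℝ => Real.exp (2*L*u) * (b0 + b1*u))
      (Real.exp (2*L*s) * (2*L*(b0 + b1*s) + b1)) s := by
  have he : HasDerivAt (fun u : ℝ => Real.exp (2*L*u)) (2*L*Real.exp (2*L*s)) s := by
    have h1 : HasDerivAt (fun u : ℝ => 2*L*u) (2*L) s := by
      simpa using (hasDerivAt_id s).const_mul (2*L)
    simpa [mul_comm] using h1.exp
  have h0 : HasDerivAt (fun u : ℝ => u) 1 s := hasDerivAt_id s
  have hq : HasDerivAt (fun u : ℝ => b0 + b1*u) b1 s := by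
    have h := (hasDerivAt_const s b0).add (h0.const_mul b1)
    refine h.congr_deriv ?_
    ring
  have h := he.mul hq
  refine h.congr_deriv ?_
  ring

lemma core1 (lam A B x : ℝ) (hlam : lam ≠ 0) :
    ∫ s in (0:ℝ)..x, (A + B*Real.exp (2*lam*s)) * ((1 + lam*s)*(x - s))
    = A*(x^2/2 + lam*x^3/6) + B*(x*(Real.exp (2*lam*x) - 1)/(4*lam)) := by
  have hderiv : ∀ s ∈ Set.uIcc (0:ℝ) x,
      HasDerivAt (fun u : ℝ => ((A*x)*(u-0) + (A*(lam*x-1)/2)*(u-0)^2 + (-(A*lam/3))*(u-0)^3)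
        + Real.exp (2*lam*u) * ((B*x/(4*lam)) + (B*x/2)*(u-0) + (-(B/2))*(u-0)^2))
      ((A + B*Real.exp (2*lam*s)) * ((1 + lam*s)*(x - s))) s := by
    intro s _
    have h := (hD1 0 (A*x) (A*(lam*x-1)/2) (-(A*lam/3)) s).add
      (hD2 lam 0 (B*x/(4*lam)) (B*x/2) (-(B/2)) s)
    refine h.congr_deriv ?_
    field_simp
    ring
  rw [intervalIntegral.integral_eq_sub_of_hasDerivAt hderiv
    (((by fun_prop : Continuous fun s : ℝ => (A + B*Real.exp (2*lam*s)) * ((1 + lam*s)*(x - s)))).intervalIntegrable _ _)]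
  norm_num [Real.exp_zero]
  field_simp
  ring

lemma core2 (lam A B tm c Dl : ℝ) (hlam : lam ≠ 0) :
    ∫ s in c..Dl, (A + B*Real.exp (2*lam*s)) * ((1 + lam*(s-c)) * (tm - (s-c)))
    = A*(tm*(Dl-c) + (lam*tm-1)*(Dl-c)^2/2 - lam*(Dl-c)^3/3)
      + B*(Real.exp (2*lam*Dl) * (-(Dl-c)^2/2 + tm*(Dl-c)/2 + tm/(4*lam))
           - Real.exp (2*lam*c) * (tm/(4*lam))) := by
  have hderiv : ∀ s ∈ Set.uIcc c Dl,
      HasDerivAt (fun u : ℝ => ((A*tm)*(u-c) + (A*(lam*tm-1)/2)*(u-c)^2 + (-(A*lam/3))*(u-c)^3)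
        + Real.exp (2*lam*u) * ((B*tm/(4*lam)) + (B*tm/2)*(u-c) + (-(B/2))*(u-c)^2))
      ((A + B*Real.exp (2*lam*s)) * ((1 + lam*(s-c)) * (tm - (s-c)))) s := by
    intro s _
    have h := (hD1 c (A*tm) (A*(lam*tm-1)/2) (-(A*lam/3)) s).add
      (hD2 lam c (B*tm/(4*lam)) (B*tm/2) (-(B/2)) s)
    refine h.congr_deriv ?_
    field_simp
    ring
  rw [intervalIntegral.integral_eq_sub_of_hasDerivAt hderiv
    (((by fun_prop : Continuous fun s : ℝ => (A + B*Real.exp (2*lam*s)) * ((1 + lam*(s-c)) * (tm - (s-c))))).intervalIntegrable _ _)]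
  field_simp
  ring

lemma core3 (lam A B c Dl : ℝ) (hlam : lam ≠ 0) :
    ∫ s in c..Dl, (A + B*Real.exp (2*lam*s))
    = A*(Dl - c) + B*(Real.exp (2*lam*Dl) - Real.exp (2*lam*c))/(2*lam) := by
  have hderiv : ∀ s ∈ Set.uIcc c Dl,
      HasDerivAt (fun u : ℝ => ((A)*(u-0) + (0:ℝ)*(u-0)^2 + (0:ℝ)*(u-0)^3)
        + Real.exp (2*lam*u) * ((B/(2*lam)) + (0:ℝ)*(u-0) + (0:ℝ)*(u-0)^2))
      (A + B*Real.exp (2*lam*s)) s := by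
    intro s _
    have h := (hD1 0 A 0 0 s).add (hD2 lam 0 (B/(2*lam)) 0 0 s)
    refine h.congr_deriv ?_
    field_simp
    ring
  rw [intervalIntegral.integral_eq_sub_of_hasDerivAt hderiv
    (((by fun_prop : Continuous fun s : ℝ => (A + B*Real.exp (2*lam*s)))).intervalIntegrable _ _)]
  field_simp
  ring

lemma coreM (lam A B x a b : ℝ) (φ : ℝ → ℝ) (hφ : Continuous φ) :
    ∫ u in a..b, (A + B*Real.exp (2*lam*(u+x))) * φ u
    = A*(∫ u in a..b, φ u) + (B*Real.exp (2*lam*x))*(∫ u in a..b, Real.exp (2*lam*u) * φ u) := by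
  have hfe : (fun u => (A + B*Real.exp (2*lam*(u+x))) * φ u)
      = fun u => A*φ u + (B*Real.exp (2*lam*x))*(Real.exp (2*lam*u) * φ u) := by
    funext u
    rw [show (2*lam*(u+x)) = 2*lam*u + 2*lam*x from by ring, Real.exp_add]
    ring
  rw [hfe, intervalIntegral.integral_add (f := fun u => A*φ u) (g := fun u => (B*Real.exp (2*lam*x))*(Real.exp (2*lam*u) * φ u)) ((continuous_const.mul hφ).intervalIntegrable _ _)
    ((continuous_const.mul ((by fun_prop : Continuous fun u : ℝ => Real.exp (2*lam*u)).mul hφ)).intervalIntegrable _ _),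
    intervalIntegral.integral_const_mul, intervalIntegral.integral_const_mul]

noncomputable def phiM (lam d : ℝ) (j : ℕ) : ℝ → ℝ := fun u =>
  (lam^2*d*Real.exp (-lam*d))^j
    * (lam^2*Real.exp (-lam*d) * ((1 + lam*(u - (j:ℝ)*d)) * (d - (u - (j:ℝ)*d))))

noncomputable def mc (lam d : ℝ) (j : ℕ) : ℝ :=
  ∫ u in ((j:ℝ)*d)..((j:ℝ)*d + d), phiM lam d j u

noncomputable def md (lam d : ℝ) (j : ℕ) : ℝ :=
  ∫ u in ((j:ℝ)*d)..((j:ℝ)*d + d), Real.exp (2*lam*u) * phiM lam d j u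

lemma phiM_cont (lam d : ℝ) (j : ℕ) : Continuous (phiM lam d j) := by
  unfold phiM; fun_prop

lemma pref_indep (lam τ Dl d last x y : ℝ) (N i : ℕ) :
    (∏ k : Fin (N+1), if i+1 ≤ (k:ℕ) then
        F lam τ (tg d last x N k) (Dl - T (tg d last x N) (i+1) (k:ℕ)) else 1)
    = (∏ k : Fin (N+1), if i+1 ≤ (k:ℕ) then
        F lam τ (tg d last y N k) (Dl - T (tg d last y N) (i+1) (k:ℕ)) else 1) := by
  apply Finset.prod_congr rfl
  intro k _
  by_cases hk : i+1 ≤ (k:ℕ)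
  · rw [if_pos hk, if_pos hk, T_tg_indep d last x y N (i+1) (k:ℕ) (by omega)]
    have ht : tg d last x N k = tg d last y N k := by
      simp only [tg]
      rw [if_neg (by omega : ¬(k:ℕ) = 0), if_neg (by omega : ¬(k:ℕ) = 0)]
    rw [ht]
  · rw [if_neg hk, if_neg hk]

lemma McoreE (lam A B d x : ℝ) (j : ℕ) :
    (∫ s in (x + (j:ℝ)*d)..(x + (j:ℝ)*d + d),
      (lam^2*Real.exp (-lam*x)*x) * ((A + B*Real.exp (2*lam*s)) * phiM lam d j (s - x)))
    = lam^2 * Real.exp (-lam*x) * (x * (A * mc lam d j + (B * md lam d j) * Real.exp (2*lam*x))) := by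
  rw [show x + (j:ℝ)*d + d = (j:ℝ)*d + d + x from by ring, show x + (j:ℝ)*d = (j:ℝ)*d + x from by ring]
  rw [← intervalIntegral.integral_comp_add_right (fun s =>
    (lam^2*Real.exp (-lam*x)*x) * ((A + B*Real.exp (2*lam*s)) * phiM lam d j (s - x))) x]
  have step2 : (∫ u in ((j:ℝ)*d)..((j:ℝ)*d + d),
      (lam^2*Real.exp (-lam*x)*x) * ((A + B*Real.exp (2*lam*(u+x))) * phiM lam d j (u + x - x)))
      = ∫ u in ((j:ℝ)*d)..((j:ℝ)*d + d),
      (lam^2*Real.exp (-lam*x)*x) * ((A + B*Real.exp (2*lam*(u+x))) * phiM lam d j u) := by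
    apply intervalIntegral.integral_congr
    intro u _
    exact congrArg (fun z => lam^2*Real.exp (-lam*x)*x
      *((A + B*Real.exp (2*lam*(u+x)))*phiM lam d j z)) (by ring : u + x - x = u)
  rw [step2, intervalIntegral.integral_const_mul,
    coreM lam A B x ((j:ℝ)*d) ((j:ℝ)*d + d) (phiM lam d j) (phiM_cont lam d j)]
  simp only [mc, md]
  ring

lemma Mcore (lam τ A B d last x : ℝ) (N j : ℕ)
    (hlam : 0 < lam) (hd : 0 < d) (hdτ : d ≤ τ) (hx : 0 < x)
    (hjN : j + 1 ≤ N) (hlastd : j + 1 = N → last = d) :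
    ∫ s in (x + (j:ℝ)*d)..(x + (j:ℝ)*d + d),
      g lam A B s * ∏ k : Fin (N+1),
        (if (k:ℕ) ≤ j+1 then F lam τ (tg d last x N k) (s - T (tg d last x N) 0 (k:ℕ)) else 1)
    = lam^2 * Real.exp (-lam*x) * (x * (A * mc lam d j + (B * md lam d j) * Real.exp (2*lam*x))) := by
  have hjd : (0:ℝ) ≤ (j:ℝ)*d := by positivity
  have haux : x + (j:ℝ)*d ≤ x + (j:ℝ)*d + d := by linarith
  have step1 : (∫ s in (x + (j:ℝ)*d)..(x + (j:ℝ)*d + d),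
      g lam A B s * ∏ k : Fin (N+1),
        (if (k:ℕ) ≤ j+1 then F lam τ (tg d last x N k) (s - T (tg d last x N) 0 (k:ℕ)) else 1))
      = ∫ s in (x + (j:ℝ)*d)..(x + (j:ℝ)*d + d),
        (lam^2*Real.exp (-lam*x)*x) * ((A + B*Real.exp (2*lam*s)) * phiM lam d j (s - x)) := by
    apply intv_congr haux
    intro s hs
    rw [prod_tg_ite lam τ d last x N (j+1) (by omega) (fun kk => s - T (tg d last x N) 0 kk)]
    rw [Finset.prod_range_succ, Finset.prod_range_succ']
    have hk0 : F lam τ (if (0:ℕ) = 0 then x else if (0:ℕ) = N then last else d)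
        (s - T (tg d last x N) 0 0) = lam^2*x*Real.exp (-lam*x) := by
      rw [if_pos rfl, T00, sub_zero]
      exact F_branch1 hx (by linarith [hs.1])
    have hmid : (∏ kk ∈ Finset.range j, F lam τ
        (if kk+1 = 0 then x else if kk+1 = N then last else d)
        (s - T (tg d last x N) 0 (kk+1))) = (lam^2*d*Real.exp (-lam*d))^j := by
      have hc : ∀ kk ∈ Finset.range j, F lam τ
          (if kk+1 = 0 then x else if kk+1 = N then last else d)
          (s - T (tg d last x N) 0 (kk+1)) = lam^2*d*Real.exp (-lam*d) := by
        intro kk hkk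
        simp only [Finset.mem_range] at hkk
        rw [if_neg (by omega), if_neg (by omega : ¬kk+1 = N), T_tg d last x N kk (by omega)]
        have hcast : (kk:ℝ) + 1 ≤ (j:ℝ) := by exact_mod_cast hkk
        exact F_branch1 hd (by nlinarith [hs.1])
      rw [Finset.prod_congr rfl hc, Finset.prod_const, Finset.card_range]
    have htop : F lam τ (if j+1 = 0 then x else if j+1 = N then last else d)
        (s - T (tg d last x N) 0 (j+1))
        = (1 + lam*(s - (x + (j:ℝ)*d))) * Real.exp (-lam*(s - (x + (j:ℝ)*d)))
          * (lam^2*(d - (s - (x + (j:ℝ)*d))) * Real.exp (-lam*(d - (s - (x + (j:ℝ)*d))))) := by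
      have hval : (if j+1 = 0 then x else if j+1 = N then last else d) = d := by
        rw [if_neg (by omega)]
        by_cases hN : j+1 = N
        · rw [if_pos hN, hlastd hN]
        · rw [if_neg hN]
      rw [hval, T_tg d last x N j (by omega)]
      exact F_branch2 (by linarith [hs.2]) (by linarith [hs.1])
    rw [hk0, hmid, htop]
    simp only [g, phiM]
    have he : Real.exp (-lam*(s - (x + (j:ℝ)*d))) * Real.exp (-lam*(d - (s - (x + (j:ℝ)*d))))
        = Real.exp (-lam*d) := by
      rw [← Real.exp_add]; congr 1; ring
    linear_combination (A + B*Real.exp (2*lam*s)) * ((lam^2*d*Real.exp (-lam*d))^j)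
      * (lam^2*Real.exp (-lam*x)*x) * ((1 + lam*(s - (x + (j:ℝ)*d)))
      * (lam^2*(d - (s - (x + (j:ℝ)*d))))) * he
  rw [step1]
  exact McoreE lam A B d x j

lemma Ilow0_eval (lam Dl τ A B d last x : ℝ) (N : ℕ)
    (hlam : 0 < lam) (hx : 0 < x) (hxτ : x ≤ τ) (hN : 1 ≤ N) :
    Ilow lam Dl τ A B 0 (tg d last x N)
    = (∏ k : Fin (N+1), if 0+1 ≤ (k:ℕ) then
        F lam τ (tg d last 1 N k) (Dl - T (tg d last 1 N) (0+1) (k:ℕ)) else 1)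
      * (lam^2*Real.exp (-lam*x)
        * (A*(x^2/2 + lam*x^3/6) + B*(x*(Real.exp (2*lam*x) - 1)/(4*lam)))) := by
  rw [Ilow]
  have hlim0 : T (tg d last x N) 0 0 = 0 := T00 _
  have hlim1 : T (tg d last x N) 0 (0+1) = x := by
    rw [T_tg d last x N 0 hN]
    norm_num
  rw [hlim0, hlim1]
  congr 1
  · exact pref_indep lam τ Dl d last x 1 N 0
  · have step1 : (∫ s in (0:ℝ)..x, g lam A B s * ∏ k : Fin (N+1),
        (if (k:ℕ) ≤ 0 then F lam τ (tg d last x N k) (s - T (tg d last x N) 0 (k:ℕ)) else 1))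
        = ∫ s in (0:ℝ)..x,
          (lam^2*Real.exp (-lam*x)) * ((A + B*Real.exp (2*lam*s)) * ((1 + lam*s)*(x - s))) := by
      apply intv_congr (le_of_lt hx)
      intro s hs
      rw [prod_tg_ite lam τ d last x N 0 (by omega) (fun kk => s - T (tg d last x N) 0 kk)]
      rw [Finset.prod_range_one, if_pos rfl, T00, sub_zero]
      rw [F_branch2 (le_of_lt hs.2) (by linarith [hs.1] : x ≤ s + τ)]
      simp only [g]
      have he : Real.exp (-lam*s) * Real.exp (-lam*(x - s)) = Real.exp (-lam*x) := by
        rw [← Real.exp_add]; congr 1; ring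
      linear_combination (A + B*Real.exp (2*lam*s)) * ((1+lam*s) * (lam^2*(x - s))) * he
    rw [step1, intervalIntegral.integral_const_mul, core1 lam A B x (ne_of_gt hlam)]

lemma IlowMid_eval (lam Dl τ A B d last x : ℝ) (N j : ℕ)
    (hlam : 0 < lam) (hd : 0 < d) (hdτ : d ≤ τ) (hx : 0 < x) (hjN : j + 2 ≤ N) :
    Ilow lam Dl τ A B (j+1) (tg d last x N)
    = (∏ k : Fin (N+1), if (j+1)+1 ≤ (k:ℕ) then
        F lam τ (tg d last 1 N k) (Dl - T (tg d last 1 N) ((j+1)+1) (k:ℕ)) else 1)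
      * (lam^2 * Real.exp (-lam*x)
        * (x * (A * mc lam d j + (B * md lam d j) * Real.exp (2*lam*x)))) := by
  rw [Ilow]
  rw [T_tg d last x N j (by omega), T_tg d last x N (j+1) (by omega)]
  rw [show x + ((j+1 : ℕ):ℝ)*d = x + (j:ℝ)*d + d from by push_cast; ring]
  congr 1
  · exact pref_indep lam τ Dl d last x 1 N (j+1)
  · exact Mcore lam τ A B d last x N j hlam hd hdτ hx (by omega) (fun h => absurd h (by omega))

lemma ItopS1 (lam Dl τ A B d tm x : ℝ) (n : ℕ)
    (hlam : 0 < lam) (hd : 0 < d) (hx : 0 < x) (hxd : x < d)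
    (hDl : ((n:ℝ)+1)*d = Dl) (hDtm : Dl < tm) (htmτ : tm < τ) :
    Itop lam Dl τ A B (tg d tm x (n+1))
    = (lam^2*Real.exp (-lam*x)*x*((lam^2*d*Real.exp (-lam*d))^n*(lam^2*Real.exp (-lam*tm))))
        * (A*(tm*(Dl-(x+(n:ℝ)*d)) + (lam*tm-1)*(Dl-(x+(n:ℝ)*d))^2/2 - lam*(Dl-(x+(n:ℝ)*d))^3/3)
          + B*(Real.exp (2*lam*Dl) * (-(Dl-(x+(n:ℝ)*d))^2/2 + tm*(Dl-(x+(n:ℝ)*d))/2 + tm/(4*lam))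
               - Real.exp (2*lam*((n:ℝ)*d))*Real.exp (2*lam*x) * (tm/(4*lam))))
      + aC lam Dl * ((lam^2*Real.exp (-lam*x)*x*((lam^2*d*Real.exp (-lam*d))^n*(lam^2*Real.exp (-lam*tm))))
          * ((1 + lam*(Dl - (x+(n:ℝ)*d))) * (tm - (Dl - (x+(n:ℝ)*d))))) := by
  have hnd : (0:ℝ) ≤ (n:ℝ)*d := by positivity
  have haDl : x + (n:ℝ)*d < Dl := by nlinarith
  rw [Itop]
  rw [T_tg d tm x (n+1) n (by omega)]
  have hpt : ∀ s, x + (n:ℝ)*d < s → s ≤ Dl →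
      g lam A B s * ∏ k : Fin (n+1+1), F lam τ (tg d tm x (n+1) k) (s - T (tg d tm x (n+1)) 0 (k:ℕ))
      = (lam^2*Real.exp (-lam*x)*x*((lam^2*d*Real.exp (-lam*d))^n*(lam^2*Real.exp (-lam*tm))))
        * ((A + B*Real.exp (2*lam*s)) * ((1 + lam*(s - (x+(n:ℝ)*d))) * (tm - (s - (x+(n:ℝ)*d))))) := by
    intro s hs1 hs2
    rw [prod_tg_all lam τ d tm x (n+1) (fun kk => s - T (tg d tm x (n+1)) 0 kk)]
    rw [Finset.prod_range_succ, Finset.prod_range_succ']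
    have hk0 : F lam τ (if (0:ℕ) = 0 then x else if (0:ℕ) = n+1 then tm else d)
        (s - T (tg d tm x (n+1)) 0 0) = lam^2*x*Real.exp (-lam*x) := by
      rw [if_pos rfl, T00, sub_zero]
      exact F_branch1 hx (by linarith)
    have hmid : (∏ kk ∈ Finset.range n, F lam τ
        (if kk+1 = 0 then x else if kk+1 = n+1 then tm else d)
        (s - T (tg d tm x (n+1)) 0 (kk+1))) = (lam^2*d*Real.exp (-lam*d))^n := by
      have hc : ∀ kk ∈ Finset.range n, F lam τ
          (if kk+1 = 0 then x else if kk+1 = n+1 then tm else d)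
          (s - T (tg d tm x (n+1)) 0 (kk+1)) = lam^2*d*Real.exp (-lam*d) := by
        intro kk hkk
        simp only [Finset.mem_range] at hkk
        rw [if_neg (by omega), if_neg (by omega), T_tg d tm x (n+1) kk (by omega)]
        have hcast : (kk:ℝ)+1 ≤ (n:ℝ) := by exact_mod_cast hkk
        exact F_branch1 hd (by nlinarith)
      rw [Finset.prod_congr rfl hc, Finset.prod_const, Finset.card_range]
    have htop : F lam τ (if n+1 = 0 then x else if n+1 = n+1 then tm else d)
        (s - T (tg d tm x (n+1)) 0 (n+1))
        = (1 + lam*(s - (x+(n:ℝ)*d))) * Real.exp (-lam*(s - (x+(n:ℝ)*d)))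
          * (lam^2*(tm - (s - (x+(n:ℝ)*d))) * Real.exp (-lam*(tm - (s - (x+(n:ℝ)*d))))) := by
      rw [if_neg (by omega), if_pos rfl, T_tg d tm x (n+1) n (by omega)]
      exact F_branch2 (by linarith) (by linarith)
    rw [hk0, hmid, htop]
    simp only [g]
    have he : Real.exp (-lam*(s - (x+(n:ℝ)*d))) * Real.exp (-lam*(tm - (s - (x+(n:ℝ)*d))))
        = Real.exp (-lam*tm) := by
      rw [← Real.exp_add]; congr 1; ring
    linear_combination (A + B*Real.exp (2*lam*s)) * ((lam^2*d*Real.exp (-lam*d))^n)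
      * (lam^2*Real.exp (-lam*x)*x) * ((1 + lam*(s - (x+(n:ℝ)*d)))
      * (lam^2*(tm - (s - (x+(n:ℝ)*d))))) * he
  have hstep : (∫ s in (x + (n:ℝ)*d)..Dl, g lam A B s * ∏ k : Fin (n+1+1),
      F lam τ (tg d tm x (n+1) k) (s - T (tg d tm x (n+1)) 0 (k:ℕ)))
      = ∫ s in (x + (n:ℝ)*d)..Dl,
        (lam^2*Real.exp (-lam*x)*x*((lam^2*d*Real.exp (-lam*d))^n*(lam^2*Real.exp (-lam*tm))))
        * ((A + B*Real.exp (2*lam*s)) * ((1 + lam*(s - (x+(n:ℝ)*d))) * (tm - (s - (x+(n:ℝ)*d))))) := by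
    apply intv_congr (le_of_lt haDl)
    intro s hs
    exact hpt s hs.1 (le_of_lt hs.2)
  rw [hstep, intervalIntegral.integral_const_mul, core2 lam A B tm (x + (n:ℝ)*d) Dl (ne_of_gt hlam)]
  have hprodΔ : (∏ k : Fin (n+1+1), F lam τ (tg d tm x (n+1) k) (Dl - T (tg d tm x (n+1)) 0 (k:ℕ)))
      = (lam^2*x*Real.exp (-lam*x)) * (lam^2*d*Real.exp (-lam*d))^n
        * ((1 + lam*(Dl - (x+(n:ℝ)*d))) * Real.exp (-lam*(Dl - (x+(n:ℝ)*d)))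
          * (lam^2*(tm - (Dl - (x+(n:ℝ)*d))) * Real.exp (-lam*(tm - (Dl - (x+(n:ℝ)*d)))))) := by
    rw [prod_tg_all lam τ d tm x (n+1) (fun kk => Dl - T (tg d tm x (n+1)) 0 kk)]
    rw [Finset.prod_range_succ, Finset.prod_range_succ']
    have hk0 : F lam τ (if (0:ℕ) = 0 then x else if (0:ℕ) = n+1 then tm else d)
        (Dl - T (tg d tm x (n+1)) 0 0) = lam^2*x*Real.exp (-lam*x) := by
      rw [if_pos rfl, T00, sub_zero]
      exact F_branch1 hx (by linarith)
    have hmid : (∏ kk ∈ Finset.range n, F lam τ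
        (if kk+1 = 0 then x else if kk+1 = n+1 then tm else d)
        (Dl - T (tg d tm x (n+1)) 0 (kk+1))) = (lam^2*d*Real.exp (-lam*d))^n := by
      have hc : ∀ kk ∈ Finset.range n, F lam τ
          (if kk+1 = 0 then x else if kk+1 = n+1 then tm else d)
          (Dl - T (tg d tm x (n+1)) 0 (kk+1)) = lam^2*d*Real.exp (-lam*d) := by
        intro kk hkk
        simp only [Finset.mem_range] at hkk
        rw [if_neg (by omega), if_neg (by omega), T_tg d tm x (n+1) kk (by omega)]
        have hcast : (kk:ℝ)+1 ≤ (n:ℝ) := by exact_mod_cast hkk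
        exact F_branch1 hd (by nlinarith)
      rw [Finset.prod_congr rfl hc, Finset.prod_const, Finset.card_range]
    have htop : F lam τ (if n+1 = 0 then x else if n+1 = n+1 then tm else d)
        (Dl - T (tg d tm x (n+1)) 0 (n+1))
        = (1 + lam*(Dl - (x+(n:ℝ)*d))) * Real.exp (-lam*(Dl - (x+(n:ℝ)*d)))
          * (lam^2*(tm - (Dl - (x+(n:ℝ)*d))) * Real.exp (-lam*(tm - (Dl - (x+(n:ℝ)*d))))) := by
      rw [if_neg (by omega), if_pos rfl, T_tg d tm x (n+1) n (by omega)]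
      exact F_branch2 (by linarith) (by linarith)
    rw [hk0, hmid, htop]
    ring
  rw [hprodΔ]
  have hsplit : Real.exp (2*lam*(x + (n:ℝ)*d))
      = Real.exp (2*lam*((n:ℝ)*d))*Real.exp (2*lam*x) := by
    rw [← Real.exp_add]; congr 1; ring
  rw [hsplit]
  have he2 : Real.exp (-lam*(Dl - (x+(n:ℝ)*d))) * Real.exp (-lam*(tm - (Dl - (x+(n:ℝ)*d))))
      = Real.exp (-lam*tm) := by
    rw [← Real.exp_add]; congr 1; ring
  linear_combination (aC lam Dl) * ((lam^2*x*Real.exp (-lam*x)) * (lam^2*d*Real.exp (-lam*d))^n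
    * ((1 + lam*(Dl - (x+(n:ℝ)*d))) * (lam^2*(tm - (Dl - (x+(n:ℝ)*d)))))) * he2

lemma ItopS2 (lam Dl τ A B d x : ℝ) (n' : ℕ)
    (hlam : 0 < lam) (hd : 0 < d) (hdτ : d ≤ τ) (hx : 0 < x) (hxd : x < d)
    (hDl : ((n':ℝ)+2)*d = Dl) :
    Itop lam Dl τ A B (tg d d x (n'+1))
    = lam^2 * Real.exp (-lam*x) * (x * (A * mc lam d n' + (B * md lam d n') * Real.exp (2*lam*x)))
      + ((lam^2*d*Real.exp (-lam*d))^(n'+1) * (lam^2*Real.exp (-lam*x)*x))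
          * (A*(Dl - (x + (n':ℝ)*d + d)) + B*(Real.exp (2*lam*Dl)
            - Real.exp (2*lam*(((n':ℝ)+1)*d))*Real.exp (2*lam*x))/(2*lam))
      + aC lam Dl * ((lam^2*x*Real.exp (-lam*x)) * (lam^2*d*Real.exp (-lam*d))^(n'+1)) := by
  have hn0 : (0:ℝ) ≤ (n':ℝ) := Nat.cast_nonneg n'
  have hnd : (0:ℝ) ≤ (n':ℝ)*d := by positivity
  have ha : x + (n':ℝ)*d < x + (n':ℝ)*d + d := by linarith
  have hb : x + (n':ℝ)*d + d < Dl := by nlinarith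
  have hE1c : Continuous (fun s : ℝ => (lam^2*Real.exp (-lam*x)*x)
      * ((A + B*Real.exp (2*lam*s)) * phiM lam d n' (s - x))) :=
    continuous_const.mul ((continuous_const.add (continuous_const.mul
      (Real.continuous_exp.comp (by fun_prop)))).mul ((phiM_cont lam d n').comp (by fun_prop)))
  have hE2c : Continuous (fun s : ℝ => ((lam^2*d*Real.exp (-lam*d))^(n'+1)
      * (lam^2*Real.exp (-lam*x)*x)) * (A + B*Real.exp (2*lam*s))) :=
    continuous_const.mul (continuous_const.add (continuous_const.mul
      (Real.continuous_exp.comp (by fun_prop))))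
  rw [Itop, T_tg d d x (n'+1) n' (by omega)]
  have hP1 : ∀ s, x + (n':ℝ)*d < s → s ≤ x + (n':ℝ)*d + d →
      g lam A B s * ∏ k : Fin (n'+1+1), F lam τ (tg d d x (n'+1) k) (s - T (tg d d x (n'+1)) 0 (k:ℕ))
      = (lam^2*Real.exp (-lam*x)*x) * ((A + B*Real.exp (2*lam*s)) * phiM lam d n' (s - x)) := by
    intro s hs1 hs2
    rw [prod_tg_all lam τ d d x (n'+1) (fun kk => s - T (tg d d x (n'+1)) 0 kk)]
    rw [Finset.prod_range_succ, Finset.prod_range_succ']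
    have hk0 : F lam τ (if (0:ℕ) = 0 then x else if (0:ℕ) = n'+1 then d else d)
        (s - T (tg d d x (n'+1)) 0 0) = lam^2*x*Real.exp (-lam*x) := by
      rw [if_pos rfl, T00, sub_zero]
      exact F_branch1 hx (by linarith)
    have hmid : (∏ kk ∈ Finset.range n', F lam τ
        (if kk+1 = 0 then x else if kk+1 = n'+1 then d else d)
        (s - T (tg d d x (n'+1)) 0 (kk+1))) = (lam^2*d*Real.exp (-lam*d))^n' := by
      have hc : ∀ kk ∈ Finset.range n', F lam τ
          (if kk+1 = 0 then x else if kk+1 = n'+1 then d else d)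
          (s - T (tg d d x (n'+1)) 0 (kk+1)) = lam^2*d*Real.exp (-lam*d) := by
        intro kk hkk
        simp only [Finset.mem_range] at hkk
        rw [if_neg (by omega), T_tg d d x (n'+1) kk (by omega)]
        have hcast : (kk:ℝ)+1 ≤ (n':ℝ) := by exact_mod_cast hkk
        have hval : (if kk+1 = n'+1 then d else d) = d := by split <;> rfl
        rw [hval]
        exact F_branch1 hd (by nlinarith)
      rw [Finset.prod_congr rfl hc, Finset.prod_const, Finset.card_range]
    have htop : F lam τ (if n'+1 = 0 then x else if n'+1 = n'+1 then d else d)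
        (s - T (tg d d x (n'+1)) 0 (n'+1))
        = (1 + lam*(s - (x+(n':ℝ)*d))) * Real.exp (-lam*(s - (x+(n':ℝ)*d)))
          * (lam^2*(d - (s - (x+(n':ℝ)*d))) * Real.exp (-lam*(d - (s - (x+(n':ℝ)*d))))) := by
      rw [if_neg (by omega), if_pos rfl, T_tg d d x (n'+1) n' (by omega)]
      exact F_branch2 (by linarith) (by linarith)
    rw [hk0, hmid, htop]
    simp only [g, phiM]
    have he : Real.exp (-lam*(s - (x+(n':ℝ)*d))) * Real.exp (-lam*(d - (s - (x+(n':ℝ)*d))))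
        = Real.exp (-lam*d) := by
      rw [← Real.exp_add]; congr 1; ring
    linear_combination (A + B*Real.exp (2*lam*s)) * ((lam^2*d*Real.exp (-lam*d))^n')
      * (lam^2*Real.exp (-lam*x)*x) * ((1 + lam*(s - (x+(n':ℝ)*d)))
      * (lam^2*(d - (s - (x+(n':ℝ)*d))))) * he
  have hP2 : ∀ s, x + (n':ℝ)*d + d < s → s ≤ Dl →
      g lam A B s * ∏ k : Fin (n'+1+1), F lam τ (tg d d x (n'+1) k) (s - T (tg d d x (n'+1)) 0 (k:ℕ))
      = ((lam^2*d*Real.exp (-lam*d))^(n'+1) * (lam^2*Real.exp (-lam*x)*x))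
          * (A + B*Real.exp (2*lam*s)) := by
    intro s hs1 hs2
    rw [prod_tg_all lam τ d d x (n'+1) (fun kk => s - T (tg d d x (n'+1)) 0 kk)]
    rw [Finset.prod_range_succ, Finset.prod_range_succ']
    have hk0 : F lam τ (if (0:ℕ) = 0 then x else if (0:ℕ) = n'+1 then d else d)
        (s - T (tg d d x (n'+1)) 0 0) = lam^2*x*Real.exp (-lam*x) := by
      rw [if_pos rfl, T00, sub_zero]
      exact F_branch1 hx (by linarith)
    have hmid : (∏ kk ∈ Finset.range n', F lam τ
        (if kk+1 = 0 then x else if kk+1 = n'+1 then d else d)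
        (s - T (tg d d x (n'+1)) 0 (kk+1))) = (lam^2*d*Real.exp (-lam*d))^n' := by
      have hc : ∀ kk ∈ Finset.range n', F lam τ
          (if kk+1 = 0 then x else if kk+1 = n'+1 then d else d)
          (s - T (tg d d x (n'+1)) 0 (kk+1)) = lam^2*d*Real.exp (-lam*d) := by
        intro kk hkk
        simp only [Finset.mem_range] at hkk
        rw [if_neg (by omega), T_tg d d x (n'+1) kk (by omega)]
        have hcast : (kk:ℝ)+1 ≤ (n':ℝ) := by exact_mod_cast hkk
        have hval : (if kk+1 = n'+1 then d else d) = d := by split <;> rfl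
        rw [hval]
        exact F_branch1 hd (by nlinarith)
      rw [Finset.prod_congr rfl hc, Finset.prod_const, Finset.card_range]
    have htop : F lam τ (if n'+1 = 0 then x else if n'+1 = n'+1 then d else d)
        (s - T (tg d d x (n'+1)) 0 (n'+1)) = lam^2*d*Real.exp (-lam*d) := by
      rw [if_neg (by omega), if_pos rfl, T_tg d d x (n'+1) n' (by omega)]
      exact F_branch1 hd (by linarith)
    rw [hk0, hmid, htop]
    simp only [g]
    ring
  rw [← intervalIntegral.integral_add_adjacent_intervals
    (intv_integrable_congr (le_of_lt ha) (fun s hs => hP1 s hs.1 hs.2) hE1c)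
    (intv_integrable_congr (le_of_lt hb) (fun s hs => hP2 s hs.1 hs.2) hE2c)]
  rw [intv_congr (le_of_lt ha) (fun s hs => hP1 s hs.1 (le_of_lt hs.2))]
  rw [intv_congr (le_of_lt hb) (fun s hs => hP2 s hs.1 (le_of_lt hs.2))]
  rw [McoreE lam A B d x n']
  rw [intervalIntegral.integral_const_mul, core3 lam A B (x + (n':ℝ)*d + d) Dl (ne_of_gt hlam)]
  have hprodΔ : (∏ k : Fin (n'+1+1), F lam τ (tg d d x (n'+1) k) (Dl - T (tg d d x (n'+1)) 0 (k:ℕ)))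
      = (lam^2*x*Real.exp (-lam*x)) * ((lam^2*d*Real.exp (-lam*d))^n' * (lam^2*d*Real.exp (-lam*d))) := by
    rw [prod_tg_all lam τ d d x (n'+1) (fun kk => Dl - T (tg d d x (n'+1)) 0 kk)]
    rw [Finset.prod_range_succ, Finset.prod_range_succ']
    have hk0 : F lam τ (if (0:ℕ) = 0 then x else if (0:ℕ) = n'+1 then d else d)
        (Dl - T (tg d d x (n'+1)) 0 0) = lam^2*x*Real.exp (-lam*x) := by
      rw [if_pos rfl, T00, sub_zero]
      exact F_branch1 hx (by nlinarith)
    have hmid : (∏ kk ∈ Finset.range n', F lam τ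
        (if kk+1 = 0 then x else if kk+1 = n'+1 then d else d)
        (Dl - T (tg d d x (n'+1)) 0 (kk+1))) = (lam^2*d*Real.exp (-lam*d))^n' := by
      have hc : ∀ kk ∈ Finset.range n', F lam τ
          (if kk+1 = 0 then x else if kk+1 = n'+1 then d else d)
          (Dl - T (tg d d x (n'+1)) 0 (kk+1)) = lam^2*d*Real.exp (-lam*d) := by
        intro kk hkk
        simp only [Finset.mem_range] at hkk
        rw [if_neg (by omega), T_tg d d x (n'+1) kk (by omega)]
        have hcast : (kk:ℝ)+1 ≤ (n':ℝ) := by exact_mod_cast hkk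
        have hval : (if kk+1 = n'+1 then d else d) = d := by split <;> rfl
        rw [hval]
        exact F_branch1 hd (by nlinarith)
      rw [Finset.prod_congr rfl hc, Finset.prod_const, Finset.card_range]
    have htop : F lam τ (if n'+1 = 0 then x else if n'+1 = n'+1 then d else d)
        (Dl - T (tg d d x (n'+1)) 0 (n'+1)) = lam^2*d*Real.exp (-lam*d) := by
      rw [if_neg (by omega), if_pos rfl, T_tg d d x (n'+1) n' (by omega)]
      exact F_branch1 hd (by nlinarith)
    rw [hk0, hmid, htop]
    ring
  rw [hprodΔ]
  have he3 : Real.exp (2*lam*(x + (n':ℝ)*d + d))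
      = Real.exp (2*lam*(((n':ℝ)+1)*d))*Real.exp (2*lam*x) := by
    rw [← Real.exp_add]; congr 1; ring
  rw [he3]
  ring

lemma ItopS2zero (lam Dl τ A B d x : ℝ)
    (hlam : 0 < lam) (hx : 0 < x) (hxDl : x < Dl) (hDlτ : Dl ≤ τ) :
    Itop lam Dl τ A B (tg d d x 0)
    = lam^2*Real.exp (-lam*x) * (A*(x^2/2 + lam*x^3/6) + B*(x*(Real.exp (2*lam*x) - 1)/(4*lam)))
      + (lam^2*Real.exp (-lam*x)*x) * (A*(Dl - x) + B*(Real.exp (2*lam*Dl) - Real.exp (2*lam*x))/(2*lam))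
      + aC lam Dl * (lam^2*x*Real.exp (-lam*x)) := by
  have hE1c : Continuous (fun s : ℝ => (lam^2*Real.exp (-lam*x))
      * ((A + B*Real.exp (2*lam*s)) * ((1 + lam*s)*(x - s)))) := by fun_prop
  have hE2c : Continuous (fun s : ℝ => (lam^2*Real.exp (-lam*x)*x) * (A + B*Real.exp (2*lam*s))) := by
    fun_prop
  rw [Itop, T00]
  have hP1 : ∀ s, 0 < s → s ≤ x →
      g lam A B s * ∏ k : Fin (0+1), F lam τ (tg d d x 0 k) (s - T (tg d d x 0) 0 (k:ℕ))
      = (lam^2*Real.exp (-lam*x)) * ((A + B*Real.exp (2*lam*s)) * ((1 + lam*s)*(x - s))) := by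
    intro s hs1 hs2
    rw [prod_tg_all lam τ d d x 0 (fun kk => s - T (tg d d x 0) 0 kk), Finset.prod_range_one,
      if_pos rfl, T00, sub_zero]
    rw [F_branch2 hs2 (by linarith : x ≤ s + τ)]
    simp only [g]
    have he : Real.exp (-lam*s) * Real.exp (-lam*(x - s)) = Real.exp (-lam*x) := by
      rw [← Real.exp_add]; congr 1; ring
    linear_combination (A + B*Real.exp (2*lam*s)) * ((1+lam*s) * (lam^2*(x - s))) * he
  have hP2 : ∀ s, x < s → s ≤ Dl →
      g lam A B s * ∏ k : Fin (0+1), F lam τ (tg d d x 0 k) (s - T (tg d d x 0) 0 (k:ℕ))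
      = (lam^2*Real.exp (-lam*x)*x) * (A + B*Real.exp (2*lam*s)) := by
    intro s hs1 hs2
    rw [prod_tg_all lam τ d d x 0 (fun kk => s - T (tg d d x 0) 0 kk), Finset.prod_range_one,
      if_pos rfl, T00, sub_zero, F_branch1 hx hs1]
    simp only [g]
    ring
  rw [← intervalIntegral.integral_add_adjacent_intervals
    (intv_integrable_congr (le_of_lt hx) (fun s hs => hP1 s hs.1 hs.2) hE1c)
    (intv_integrable_congr (le_of_lt hxDl) (fun s hs => hP2 s hs.1 hs.2) hE2c)]
  rw [intv_congr (le_of_lt hx) (fun s hs => hP1 s hs.1 (le_of_lt hs.2))]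
  rw [intv_congr (le_of_lt hxDl) (fun s hs => hP2 s hs.1 (le_of_lt hs.2))]
  rw [intervalIntegral.integral_const_mul, intervalIntegral.integral_const_mul,
      core1 lam A B x (ne_of_gt hlam), core3 lam A B x Dl (ne_of_gt hlam)]
  have hprodΔ : (∏ k : Fin (0+1), F lam τ (tg d d x 0 k) (Dl - T (tg d d x 0) 0 (k:ℕ)))
      = lam^2*x*Real.exp (-lam*x) := by
    rw [prod_tg_all lam τ d d x 0 (fun kk => Dl - T (tg d d x 0) 0 kk), Finset.prod_range_one,
      if_pos rfl, T00, sub_zero]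
    exact F_branch1 hx hxDl
  rw [hprodΔ]

lemma polyvanish (X e0 e1 e2 e3 e4 : ℝ) (hX : 0 < X)
    (h : ∀ x ∈ Set.Ioo (0:ℝ) X, e0 + e1*x + e2*x^2 + e3*x^3 + e4*x^4 = 0) :
    e4 = 0 ∧ e3 = 0 := by
  set p : Polynomial ℝ := Polynomial.C e0 + Polynomial.C e1 * Polynomial.X
    + Polynomial.C e2 * Polynomial.X^2 + Polynomial.C e3 * Polynomial.X^3
    + Polynomial.C e4 * Polynomial.X^4 with hp_def
  have hroot : {x : ℝ | p.IsRoot x}.Infinite := by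
    apply (Set.Ioo_infinite hX).mono
    intro x hx
    have := h x hx
    simp only [Set.mem_setOf_eq, Polynomial.IsRoot, hp_def]
    simp only [Polynomial.eval_add, Polynomial.eval_mul, Polynomial.eval_pow,
      Polynomial.eval_C, Polynomial.eval_X]
    linarith [this]
  have hp : p = 0 := Polynomial.eq_zero_of_infinite_isRoot p hroot
  constructor
  · have h4 : p.coeff 4 = 0 := by rw [hp]; simp
    rw [hp_def] at h4
    simpa using h4
  · have h3 : p.coeff 3 = 0 := by rw [hp]; simp
    rw [hp_def] at h3
    simpa using h3

lemma ZV (L X c0 c1 c2 c3 c4 d0 d1 : ℝ) (hL : L ≠ 0) (hX : 0 < X)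
    (h : ∀ x ∈ Set.Ioo (0:ℝ) X,
      (c0 + c1*x + c2*x^2 + c3*x^3 + c4*x^4) + Real.exp (2*L*x)*(d0 + d1*x) = 0) :
    c4 = 0 ∧ c3 = 0 := by
  have hd0 : ∀ y : ℝ, HasDerivAt (fun x : ℝ =>
      (c0 + c1*x + c2*x^2 + c3*x^3 + c4*x^4) + Real.exp (2*L*x)*(d0 + d1*x))
      ((c1 + (2*c2)*y + (3*c3)*y^2 + (4*c4)*y^3 + 0*y^4)
        + Real.exp (2*L*y)*((2*L*d0 + d1) + (2*L*d1)*y)) y := by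
    intro y
    have h1 := (hD3 c0 c1 c2 c3 c4 y).add (hD4 L d0 d1 y)
    refine h1.congr_deriv ?_
    ring
  have h1 : ∀ x ∈ Set.Ioo (0:ℝ) X, (c1 + (2*c2)*x + (3*c3)*x^2 + (4*c4)*x^3 + 0*x^4)
      + Real.exp (2*L*x)*((2*L*d0 + d1) + (2*L*d1)*x) = 0 := DD hd0 h
  have hd1 : ∀ y : ℝ, HasDerivAt (fun x : ℝ =>
      (c1 + (2*c2)*x + (3*c3)*x^2 + (4*c4)*x^3 + 0*x^4)
        + Real.exp (2*L*x)*((2*L*d0 + d1) + (2*L*d1)*x))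
      (((2*c2) + (6*c3)*y + (12*c4)*y^2 + 0*y^3 + 0*y^4)
        + Real.exp (2*L*y)*((2*L*(2*L*d0 + d1) + 2*L*d1) + (2*L*(2*L*d1))*y)) y := by
    intro y
    have h2 := (hD3 c1 (2*c2) (3*c3) (4*c4) 0 y).add (hD4 L (2*L*d0 + d1) (2*L*d1) y)
    refine h2.congr_deriv ?_
    ring
  have h2 : ∀ x ∈ Set.Ioo (0:ℝ) X, ((2*c2) + (6*c3)*x + (12*c4)*x^2 + 0*x^3 + 0*x^4)
      + Real.exp (2*L*x)*((2*L*(2*L*d0 + d1) + 2*L*d1) + (2*L*(2*L*d1))*x) = 0 := DD hd1 h1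
  have hcomb : ∀ x ∈ Set.Ioo (0:ℝ) X,
      (4*L^2*c0 - 4*L*c1 + 2*c2) + (4*L^2*c1 - 8*L*c2 + 6*c3)*x + (4*L^2*c2 - 12*L*c3 + 12*c4)*x^2
        + (4*L^2*c3 - 16*L*c4)*x^3 + (4*L^2*c4)*x^4 = 0 := by
    intro x hx
    linear_combination (h2 x hx) - (4*L)*(h1 x hx) + (4*L^2)*(h x hx)
  obtain ⟨h4, h3⟩ := polyvanish X _ _ _ _ _ hX hcomb
  have hc4 : c4 = 0 := by
    have h4' : c4*(4*L^2) = 0 := by linear_combination h4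
    rcases mul_eq_zero.mp h4' with hh | hh
    · exact hh
    · exact absurd hh (mul_ne_zero (by norm_num) (pow_ne_zero 2 hL))
  refine ⟨hc4, ?_⟩
  have h3' : c3*(4*L^2) = 0 := by linear_combination h3 + (16*L)*hc4
  rcases mul_eq_zero.mp h3' with hh | hh
  · exact hh
  · exact absurd hh (mul_ne_zero (by norm_num) (pow_ne_zero 2 hL))

lemma S1eval (lam Dl τ A B d tm : ℝ) (n : ℕ)
    (hlam : 0 < lam) (hd : 0 < d) (hdτ : d ≤ τ) (hDl : ((n:ℝ)+1)*d = Dl)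
    (hDtm : Dl < tm) (htmτ : tm < τ) :
    ∃ a b K0 : ℝ, ∀ x ∈ Set.Ioo (0:ℝ) d,
      J lam Dl τ A B (tg d tm x (n+1))
      = lam^2*Real.exp (-lam*x) * (x*(a + b*Real.exp (2*lam*x)))
        + K0*(lam^2*Real.exp (-lam*x)
            *(A*(x^2/2 + lam*x^3/6) + B*(x*(Real.exp (2*lam*x) - 1)/(4*lam))))
        + (lam^2*Real.exp (-lam*x)*x*((lam^2*d*Real.exp (-lam*d))^n*(lam^2*Real.exp (-lam*tm))))
            * (A*(tm*(Dl-(x+(n:ℝ)*d)) + (lam*tm-1)*(Dl-(x+(n:ℝ)*d))^2/2 - lam*(Dl-(x+(n:ℝ)*d))^3/3)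
              + B*(Real.exp (2*lam*Dl) * (-(Dl-(x+(n:ℝ)*d))^2/2 + tm*(Dl-(x+(n:ℝ)*d))/2 + tm/(4*lam))
                   - Real.exp (2*lam*((n:ℝ)*d))*Real.exp (2*lam*x) * (tm/(4*lam))))
        + aC lam Dl * ((lam^2*Real.exp (-lam*x)*x*((lam^2*d*Real.exp (-lam*d))^n*(lam^2*Real.exp (-lam*tm))))
            * ((1 + lam*(Dl - (x+(n:ℝ)*d))) * (tm - (Dl - (x+(n:ℝ)*d))))) := by
  refine ⟨∑ kk ∈ Finset.range n, (∏ k : Fin (n+1+1), if (kk+1)+1 ≤ (k:ℕ) then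
      F lam τ (tg d tm 1 (n+1) k) (Dl - T (tg d tm 1 (n+1)) ((kk+1)+1) (k:ℕ)) else 1) * (A * mc lam d kk),
    ∑ kk ∈ Finset.range n, (∏ k : Fin (n+1+1), if (kk+1)+1 ≤ (k:ℕ) then
      F lam τ (tg d tm 1 (n+1) k) (Dl - T (tg d tm 1 (n+1)) ((kk+1)+1) (k:ℕ)) else 1) * (B * md lam d kk),
    (∏ k : Fin (n+1+1), if 0+1 ≤ (k:ℕ) then F lam τ (tg d tm 1 (n+1) k)
      (Dl - T (tg d tm 1 (n+1)) (0+1) (k:ℕ)) else 1), ?_⟩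
  intro x hx
  obtain ⟨hx0, hxd⟩ := hx
  have hxτ : x ≤ τ := by linarith
  rw [J, Finset.sum_range_succ']
  have hmids : (∑ kk ∈ Finset.range n, Ilow lam Dl τ A B (kk+1) (tg d tm x (n+1)))
      = (lam^2*Real.exp (-lam*x)*x) * (∑ kk ∈ Finset.range n, (∏ k : Fin (n+1+1),
            if (kk+1)+1 ≤ (k:ℕ) then F lam τ (tg d tm 1 (n+1) k)
              (Dl - T (tg d tm 1 (n+1)) ((kk+1)+1) (k:ℕ)) else 1) * (A * mc lam d kk))
        + (lam^2*Real.exp (-lam*x)*x*Real.exp (2*lam*x)) * (∑ kk ∈ Finset.range n, (∏ k : Fin (n+1+1),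
            if (kk+1)+1 ≤ (k:ℕ) then F lam τ (tg d tm 1 (n+1) k)
              (Dl - T (tg d tm 1 (n+1)) ((kk+1)+1) (k:ℕ)) else 1) * (B * md lam d kk)) := by
    have hterm : ∀ kk ∈ Finset.range n, Ilow lam Dl τ A B (kk+1) (tg d tm x (n+1))
        = (lam^2*Real.exp (-lam*x)*x) * ((∏ k : Fin (n+1+1),
            if (kk+1)+1 ≤ (k:ℕ) then F lam τ (tg d tm 1 (n+1) k)
              (Dl - T (tg d tm 1 (n+1)) ((kk+1)+1) (k:ℕ)) else 1) * (A * mc lam d kk))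
          + (lam^2*Real.exp (-lam*x)*x*Real.exp (2*lam*x)) * ((∏ k : Fin (n+1+1),
            if (kk+1)+1 ≤ (k:ℕ) then F lam τ (tg d tm 1 (n+1) k)
              (Dl - T (tg d tm 1 (n+1)) ((kk+1)+1) (k:ℕ)) else 1) * (B * md lam d kk)) := by
      intro kk hkk
      simp only [Finset.mem_range] at hkk
      rw [IlowMid_eval lam Dl τ A B d tm x (n+1) kk hlam hd hdτ hx0 (by omega)]
      ring
    rw [Finset.sum_congr rfl hterm, Finset.sum_add_distrib, ← Finset.mul_sum, ← Finset.mul_sum]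
  rw [hmids, Ilow0_eval lam Dl τ A B d tm x (n+1) hlam hx0 hxτ (by omega),
    ItopS1 lam Dl τ A B d tm x n hlam hd hx0 hxd hDl hDtm htmτ]
  ring

lemma S2eval (lam Dl τ A B d : ℝ) (n' : ℕ)
    (hlam : 0 < lam) (hd : 0 < d) (hdτ : d ≤ τ) (hDl : ((n':ℝ)+2)*d = Dl) :
    ∃ a b K0 : ℝ, ∀ x ∈ Set.Ioo (0:ℝ) d,
      J lam Dl τ A B (tg d d x (n'+1))
      = lam^2*Real.exp (-lam*x) * (x*(a + b*Real.exp (2*lam*x)))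
        + K0*(lam^2*Real.exp (-lam*x)
            *(A*(x^2/2 + lam*x^3/6) + B*(x*(Real.exp (2*lam*x) - 1)/(4*lam))))
        + ((lam^2*d*Real.exp (-lam*d))^(n'+1) * (lam^2*Real.exp (-lam*x)*x))
            * (A*(Dl - (x + (n':ℝ)*d + d)) + B*(Real.exp (2*lam*Dl)
              - Real.exp (2*lam*(((n':ℝ)+1)*d))*Real.exp (2*lam*x))/(2*lam))
        + aC lam Dl * ((lam^2*x*Real.exp (-lam*x)) * (lam^2*d*Real.exp (-lam*d))^(n'+1)) := by
  refine ⟨(∑ kk ∈ Finset.range n', (∏ k : Fin (n'+1+1), if (kk+1)+1 ≤ (k:ℕ) then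
      F lam τ (tg d d 1 (n'+1) k) (Dl - T (tg d d 1 (n'+1)) ((kk+1)+1) (k:ℕ)) else 1) * (A * mc lam d kk))
        + A * mc lam d n',
    (∑ kk ∈ Finset.range n', (∏ k : Fin (n'+1+1), if (kk+1)+1 ≤ (k:ℕ) then
      F lam τ (tg d d 1 (n'+1) k) (Dl - T (tg d d 1 (n'+1)) ((kk+1)+1) (k:ℕ)) else 1) * (B * md lam d kk))
        + B * md lam d n',
    (∏ k : Fin (n'+1+1), if 0+1 ≤ (k:ℕ) then F lam τ (tg d d 1 (n'+1) k)
      (Dl - T (tg d d 1 (n'+1)) (0+1) (k:ℕ)) else 1), ?_⟩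
  intro x hx
  obtain ⟨hx0, hxd⟩ := hx
  have hxτ : x ≤ τ := by linarith
  rw [J, Finset.sum_range_succ']
  have hmids : (∑ kk ∈ Finset.range n', Ilow lam Dl τ A B (kk+1) (tg d d x (n'+1)))
      = (lam^2*Real.exp (-lam*x)*x) * (∑ kk ∈ Finset.range n', (∏ k : Fin (n'+1+1),
            if (kk+1)+1 ≤ (k:ℕ) then F lam τ (tg d d 1 (n'+1) k)
              (Dl - T (tg d d 1 (n'+1)) ((kk+1)+1) (k:ℕ)) else 1) * (A * mc lam d kk))
        + (lam^2*Real.exp (-lam*x)*x*Real.exp (2*lam*x)) * (∑ kk ∈ Finset.range n', (∏ k : Fin (n'+1+1),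
            if (kk+1)+1 ≤ (k:ℕ) then F lam τ (tg d d 1 (n'+1) k)
              (Dl - T (tg d d 1 (n'+1)) ((kk+1)+1) (k:ℕ)) else 1) * (B * md lam d kk)) := by
    have hterm : ∀ kk ∈ Finset.range n', Ilow lam Dl τ A B (kk+1) (tg d d x (n'+1))
        = (lam^2*Real.exp (-lam*x)*x) * ((∏ k : Fin (n'+1+1),
            if (kk+1)+1 ≤ (k:ℕ) then F lam τ (tg d d 1 (n'+1) k)
              (Dl - T (tg d d 1 (n'+1)) ((kk+1)+1) (k:ℕ)) else 1) * (A * mc lam d kk))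
          + (lam^2*Real.exp (-lam*x)*x*Real.exp (2*lam*x)) * ((∏ k : Fin (n'+1+1),
            if (kk+1)+1 ≤ (k:ℕ) then F lam τ (tg d d 1 (n'+1) k)
              (Dl - T (tg d d 1 (n'+1)) ((kk+1)+1) (k:ℕ)) else 1) * (B * md lam d kk)) := by
      intro kk hkk
      simp only [Finset.mem_range] at hkk
      rw [IlowMid_eval lam Dl τ A B d d x (n'+1) kk hlam hd hdτ hx0 (by omega)]
      ring
    rw [Finset.sum_congr rfl hterm, Finset.sum_add_distrib, ← Finset.mul_sum, ← Finset.mul_sum]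
  rw [hmids, Ilow0_eval lam Dl τ A B d d x (n'+1) hlam hx0 hxτ (by omega),
    ItopS2 lam Dl τ A B d x n' hlam hd hdτ hx0 hxd hDl]
  ring

set_option maxHeartbeats 2000000 in
/-- non-Markovian property: assume `g > 0` on `(0, Δ)`. For every
`m = n+1 ≥ 1` there is no function `Q` of the last `m` intervals such that
`J_m(t₀,…,t_m) = Q(t₁,…,t_m) · J_{m−1}(t₀,…,t_{m−1})` on the domain
`{t_j > 0 ∀ j, Σ_{j=0}^{m−1} t_j < Δ, t_m < τ}`: the conditional density necessarily
depends on `t₀`, so the ISI sequence is not a Markov chain of any finite order. -/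
theorem stmt15 (lam Δ τ A B : ℝ) (hlam : 0 < lam) (hΔ : 0 < Δ) (hΔτ : Δ < τ)
    (hg : ∀ s ∈ Set.Ioo (0 : ℝ) Δ, 0 < g lam A B s) (n : ℕ) :
    ¬ ∃ Q : (Fin (n + 1) → ℝ) → ℝ,
      ∀ t : Fin (n + 2) → ℝ,
        (∀ j, 0 < t j) → T t 0 (n + 1) < Δ → t (Fin.last (n + 1)) < τ →
          J lam Δ τ A B t = Q (Fin.tail t) * J lam Δ τ A B (Fin.init t) := by
  rintro ⟨Q, hQ⟩
  obtain ⟨d, hd_def⟩ : ∃ d : ℝ, d = Δ/((n:ℝ)+1) := ⟨_, rfl⟩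
  obtain ⟨tm, htm_def⟩ : ∃ tmv : ℝ, tmv = (Δ+τ)/2 := ⟨_, rfl⟩
  have hn0 : (0:ℝ) ≤ (n:ℝ) := Nat.cast_nonneg n
  have hd : 0 < d := by rw [hd_def]; positivity
  have hDl : ((n:ℝ)+1)*d = Δ := by rw [hd_def]; field_simp
  have hdΔ : d ≤ Δ := by nlinarith
  have hdτ : d ≤ τ := by linarith
  have hDtm : Δ < tm := by rw [htm_def]; linarith
  have htmτ : tm < τ := by rw [htm_def]; linarith
  have htm0 : 0 < tm := by linarith
  have htail : ∀ x : ℝ, Fin.tail (tg d tm x (n+1)) = Fin.tail (tg d tm 1 (n+1)) := by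
    intro x
    funext k
    simp only [Fin.tail, tg, Fin.val_succ]
    rw [if_neg (by omega : ¬(k:ℕ)+1 = 0), if_neg (by omega : ¬(k:ℕ)+1 = 0)]
  have hinit : ∀ x : ℝ, Fin.init (tg d tm x (n+1)) = tg d d x n := by
    intro x
    funext k
    have hkn : (k:ℕ) < n+1 := k.isLt
    simp only [Fin.init, tg, Fin.coe_castSucc]
    by_cases h0 : (k:ℕ) = 0
    · rw [if_pos h0, if_pos h0]
    · rw [if_neg h0, if_neg h0, if_neg (by omega : ¬(k:ℕ) = n+1)]
      by_cases hn : (k:ℕ) = n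
      · rw [if_pos hn]
      · rw [if_neg hn]
  obtain ⟨a2, b2, K0, hS1⟩ := S1eval lam Δ τ A B d tm n hlam hd hdτ hDl hDtm htmτ
  have hS2' : ∃ a b K0 : ℝ, ∀ x ∈ Set.Ioo (0:ℝ) d,
      J lam Δ τ A B (tg d d x n)
      = lam^2*Real.exp (-lam*x) * (x*(a + b*Real.exp (2*lam*x)))
        + K0*(lam^2*Real.exp (-lam*x)
            *(A*(x^2/2 + lam*x^3/6) + B*(x*(Real.exp (2*lam*x) - 1)/(4*lam))))
        + ((lam^2*d*Real.exp (-lam*d))^n * (lam^2*Real.exp (-lam*x)*x))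
            * (A*(Δ - (x + (n:ℝ)*d)) + B*(Real.exp (2*lam*Δ)
              - Real.exp (2*lam*((n:ℝ)*d))*Real.exp (2*lam*x))/(2*lam))
        + aC lam Δ * ((lam^2*x*Real.exp (-lam*x)) * (lam^2*d*Real.exp (-lam*d))^n) := by
    cases n with
    | zero =>
      refine ⟨0, 0, 1, ?_⟩
      intro x hx
      obtain ⟨hx0, hxd⟩ := hx
      have hxΔ : x < Δ := by linarith
      rw [J, Finset.sum_range_zero, zero_add,
        ItopS2zero lam Δ τ A B d x hlam hx0 hxΔ (le_of_lt hΔτ)]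
      push_cast
      simp only [zero_mul, mul_zero, Real.exp_zero, pow_zero]
      ring
    | succ n' =>
      obtain ⟨a, b, K0', h⟩ := S2eval lam Δ τ A B d n' hlam hd hdτ
        (by push_cast at hDl ⊢; linarith)
      refine ⟨a, b, K0', ?_⟩
      intro x hx
      rw [h x hx]
      push_cast
      ring
  obtain ⟨a1, b1, K0', hS2⟩ := hS2'
  set q := Q (Fin.tail (tg d tm 1 (n+1))) with hq_def
  have hmain : ∀ x ∈ Set.Ioo (0:ℝ) d,
      J lam Δ τ A B (tg d tm x (n+1)) = q * J lam Δ τ A B (tg d d x n) := by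
    intro x hx
    obtain ⟨hx0, hxd⟩ := hx
    have h1 : ∀ j, 0 < tg d tm x (n+1) j := by
      intro j
      simp only [tg]
      split_ifs
      · exact hx0
      · exact htm0
      · exact hd
    have h2 : T (tg d tm x (n+1)) 0 (n+1) < Δ := by
      rw [T_tg d tm x (n+1) n (by omega)]
      nlinarith
    have h3 : tg d tm x (n+1) (Fin.last (n+1)) < τ := by
      have hval : tg d tm x (n+1) (Fin.last (n+1)) = tm := by
        simp [tg]
      rw [hval]
      exact htmτ
    have hthis := hQ (tg d tm x (n+1)) h1 h2 h3
    rw [htail x, hinit x, ← hq_def] at hthis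
    exact hthis
  have hne : ∀ x : ℝ, lam^2*Real.exp (-lam*x) ≠ 0 := fun x => by positivity
  obtain ⟨h4, h3⟩ := ZV lam d 0
    (a2 - K0*B/(4*lam)
      + ((lam^2*d*Real.exp (-lam*d))^n*(lam^2*Real.exp (-lam*tm)))*A
        *(tm*(Δ - (n:ℝ)*d) + (lam*tm-1)*(Δ - (n:ℝ)*d)^2/2 - lam*(Δ - (n:ℝ)*d)^3/3)
      + ((lam^2*d*Real.exp (-lam*d))^n*(lam^2*Real.exp (-lam*tm)))*B*Real.exp (2*lam*Δ)
        *(-(Δ - (n:ℝ)*d)^2/2 + tm*(Δ - (n:ℝ)*d)/2 + tm/(4*lam))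
      + aC lam Δ*((lam^2*d*Real.exp (-lam*d))^n*(lam^2*Real.exp (-lam*tm)))
        *((1+lam*(Δ - (n:ℝ)*d))*(tm-(Δ - (n:ℝ)*d)))
      - q*(a1 - K0'*B/(4*lam) + (lam^2*d*Real.exp (-lam*d))^n
          *(A*(Δ - (n:ℝ)*d) + B*Real.exp (2*lam*Δ)/(2*lam))
          + aC lam Δ*(lam^2*d*Real.exp (-lam*d))^n))
    (K0*A/2
      + ((lam^2*d*Real.exp (-lam*d))^n*(lam^2*Real.exp (-lam*tm)))*A
        *(-tm - (lam*tm-1)*(Δ - (n:ℝ)*d) + lam*(Δ - (n:ℝ)*d)^2)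
      + ((lam^2*d*Real.exp (-lam*d))^n*(lam^2*Real.exp (-lam*tm)))*B*Real.exp (2*lam*Δ)
        *((Δ - (n:ℝ)*d) - tm/2)
      + aC lam Δ*((lam^2*d*Real.exp (-lam*d))^n*(lam^2*Real.exp (-lam*tm)))
        *((1+lam*(Δ - (n:ℝ)*d)) - lam*(tm-(Δ - (n:ℝ)*d)))
      - q*(K0'*A/2 - (lam^2*d*Real.exp (-lam*d))^n*A))
    (K0*A*lam/6
      + ((lam^2*d*Real.exp (-lam*d))^n*(lam^2*Real.exp (-lam*tm)))*A
        *((lam*tm-1)/2 - lam*(Δ - (n:ℝ)*d))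
      + ((lam^2*d*Real.exp (-lam*d))^n*(lam^2*Real.exp (-lam*tm)))*B*Real.exp (2*lam*Δ)*(-(1:ℝ)/2)
      + aC lam Δ*((lam^2*d*Real.exp (-lam*d))^n*(lam^2*Real.exp (-lam*tm)))*(-lam)
      - q*(K0'*A*lam/6))
    (((lam^2*d*Real.exp (-lam*d))^n*(lam^2*Real.exp (-lam*tm)))*A*lam/3)
    0
    (b2 + K0*B/(4*lam)
      - ((lam^2*d*Real.exp (-lam*d))^n*(lam^2*Real.exp (-lam*tm)))*B*tm
          *Real.exp (2*lam*((n:ℝ)*d))/(4*lam)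
      - q*(b1 + K0'*B/(4*lam)
          - (lam^2*d*Real.exp (-lam*d))^n*B*Real.exp (2*lam*((n:ℝ)*d))/(2*lam)))
    (ne_of_gt hlam) hd
    (by
      intro x hx
      have hm := hmain x hx
      rw [hS1 x hx, hS2 x hx] at hm
      refine mul_left_cancel₀ (hne x) ?_
      linear_combination hm)
  have hβl : 0 < (lam^2*d*Real.exp (-lam*d))^n*(lam^2*Real.exp (-lam*tm))*lam := by positivity
  have h4' : A * ((lam^2*d*Real.exp (-lam*d))^n*(lam^2*Real.exp (-lam*tm))*lam) = 0 := by
    linear_combination 3*h4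
  have hA : A = 0 := by
    rcases mul_eq_zero.mp h4' with hh | hh
    · exact hh
    · exact absurd hh (ne_of_gt hβl)
  have hgp := hg (Δ/2) ⟨by positivity, by linarith⟩
  simp only [g] at hgp
  rw [hA] at hgp
  have hB : 0 < B := by
    rcases lt_trichotomy B 0 with hb | hb | hb
    · nlinarith [mul_neg_of_neg_of_pos hb (Real.exp_pos (2*lam*(Δ/2)))]
    · rw [hb] at hgp; simp at hgp
    · exact hb
  have haC : 0 < aC lam Δ := by
    have h1 : 0 < 3 + 2*lam*Δ := by nlinarith
    have h2 : 0 < (3 + 2*lam*Δ)*Real.exp (2*lam*Δ) + 1 := by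
      nlinarith [mul_pos h1 (Real.exp_pos (2*lam*Δ))]
    rw [aC]
    positivity
  rw [hA] at h3
  have hkey : (lam^2*d*Real.exp (-lam*d))^n*(lam^2*Real.exp (-lam*tm))
      * (B*Real.exp (2*lam*Δ)/2 + aC lam Δ*lam) = 0 := by linear_combination -h3
  have hpos : 0 < (lam^2*d*Real.exp (-lam*d))^n*(lam^2*Real.exp (-lam*tm))
      * (B*Real.exp (2*lam*Δ)/2 + aC lam Δ*lam) := by
    have hk : 0 < (lam^2*d*Real.exp (-lam*d))^n*(lam^2*Real.exp (-lam*tm)) := by positivity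
    have hin : 0 < B*Real.exp (2*lam*Δ)/2 + aC lam Δ*lam := by
      nlinarith [mul_pos hB (Real.exp_pos (2*lam*Δ)), mul_pos haC hlam]
    exact mul_pos hk hin
  exact absurd hkey (ne_of_gt hpos)
end

section
/- Let t₀ ∈ (0, Δ). Then the one-sided limits of t₁ ↦ J_1(t₀, t₁) at t₁ = Δ − t₀ exist, and (limit from below) − (limit from above) = a · λ²·(Δ − t₀)·exp(−λ·(Δ − t₀)) · λ²·t₀·exp(−λ·t₀), which is strictly positive. Thus the joint density of two consecutive interspike intervals has a jump across the line t₀ + t₁ = Δ. -/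
open Real Set Filter MeasureTheory

/-- Joint density of two consecutive ISIs (valid for `0 < t₀ < Δ`, `0 < t₁ < τ`). -/
noncomputable def J1 (lam Δ τ A B t₀ t₁ : ℝ) : ℝ :=
  F lam τ t₁ Δ * (∫ s in (0 : ℝ)..t₀, g lam A B s * F lam τ t₀ s)
    + (∫ s in t₀..Δ, F lam τ t₁ (s - t₀) * F lam τ t₀ s * g lam A B s)
    + aC lam Δ * F lam τ t₁ (Δ - t₀) * F lam τ t₀ Δ

lemma measurable_F (lam τ t : ℝ) : Measurable (fun s => F lam τ t s) := by
  unfold F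
  have h1 : MeasurableSet {s : ℝ | 0 < t ∧ t < s} := by
    rcases lt_or_ge 0 t with h | h
    · simp only [h, true_and]; exact measurableSet_Ioi
    · simp [h.not_gt]
  have h2 : MeasurableSet {s : ℝ | s ≤ t ∧ t ≤ s + τ} :=
    (measurableSet_le measurable_id measurable_const).inter
      (measurableSet_le measurable_const (measurable_id.add_const _))
  exact Measurable.ite h1 measurable_const
    (Measurable.ite h2 (by fun_prop) measurable_const)


lemma measurable_g (lam A B : ℝ) : Measurable (g lam A B) := by
  unfold g; fun_prop

lemma Fb1 (lam τ t s : ℝ) (ht : 0 < t) (hts : t < s) :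
    F lam τ t s = lam ^ 2 * t * Real.exp (-lam * t) := by
  unfold F; rw [if_pos ⟨ht, hts⟩]

lemma Fb2 (lam τ t s : ℝ) (h1 : s ≤ t) (h2 : t ≤ s + τ) :
    F lam τ t s =
      (1 + lam * s) * Real.exp (-lam * s) * (lam ^ 2 * (t - s) * Real.exp (-lam * (t - s))) := by
  unfold F
  rw [if_neg (fun h => absurd h1 (not_le.2 h.2)), if_pos ⟨h1, h2⟩]

lemma F_nonneg (lam τ t s : ℝ) (hlam : 0 < lam) (hs : 0 ≤ s) : 0 ≤ F lam τ t s := by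
  unfold F; split_ifs with h1 h2
  · have := h1.1; positivity
  · have h4 : 0 ≤ t - s := sub_nonneg.2 h2.1
    have h5 : 0 ≤ lam ^ 2 * (t - s) * Real.exp (-lam * (t - s)) :=
      mul_nonneg (mul_nonneg (by positivity) h4) (Real.exp_pos _).le
    exact mul_nonneg (by positivity) h5
  · exact le_refl _

lemma F_le (lam τ t s S Tm : ℝ) (hlam : 0 < lam) (hs : 0 ≤ s) (hsS : s ≤ S)
    (htT : t ≤ Tm) (hT : 0 ≤ Tm) : F lam τ t s ≤ (1 + lam * S) * (lam ^ 2 * Tm) := by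
  have hS : 0 ≤ S := hs.trans hsS
  unfold F; split_ifs with h1 h2
  · have h0 : 0 < t := h1.1
    have he : Real.exp (-lam * t) ≤ 1 := Real.exp_le_one_iff.2 (by nlinarith)
    have b1 : lam ^ 2 * t * Real.exp (-lam * t) ≤ lam ^ 2 * Tm := by
      nlinarith [mul_le_mul_of_nonneg_left he (show (0:ℝ) ≤ lam ^ 2 * t by positivity),
        mul_le_mul_of_nonneg_left htT (sq_nonneg lam)]
    nlinarith [mul_nonneg (mul_nonneg hlam.le hS) (mul_nonneg (sq_nonneg lam) hT)]
  · have h4 : 0 ≤ t - s := sub_nonneg.2 h2.1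
    have ht0 : 0 ≤ t := hs.trans h2.1
    have he1 : Real.exp (-lam * s) ≤ 1 := Real.exp_le_one_iff.2 (by nlinarith)
    have he2 : Real.exp (-lam * (t - s)) ≤ 1 := Real.exp_le_one_iff.2 (by nlinarith)
    have A1 : (1 + lam * s) * Real.exp (-lam * s) ≤ 1 + lam * S := by
      have h6 : (1 + lam * s) * Real.exp (-lam * s) ≤ (1 + lam * s) * 1 :=
        mul_le_mul_of_nonneg_left he1 (by positivity)
      nlinarith
    have A2 : lam ^ 2 * (t - s) * Real.exp (-lam * (t - s)) ≤ lam ^ 2 * Tm := by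
      have h6 : lam ^ 2 * (t - s) * Real.exp (-lam * (t - s)) ≤ lam ^ 2 * (t - s) * 1 :=
        mul_le_mul_of_nonneg_left he2 (mul_nonneg (sq_nonneg _) h4)
      nlinarith [sq_nonneg lam]
    exact mul_le_mul A1 A2
      (mul_nonneg (mul_nonneg (sq_nonneg _) h4) (Real.exp_pos _).le) (by positivity)
  · positivity

lemma contF1 (lam τ u x : ℝ) (h0 : 0 < x) (h2 : x < u) :
    ContinuousAt (fun t => F lam τ t u) x := by
  have hev : (fun t => lam ^ 2 * t * Real.exp (-lam * t)) =ᶠ[nhds x] fun t => F lam τ t u := by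
    filter_upwards [Ioo_mem_nhds h0 h2] with t ht
    exact (Fb1 lam τ t u ht.1 ht.2).symm
  exact ContinuousAt.congr (by fun_prop) hev

lemma contF2 (lam τ u x : ℝ) (h1 : u < x) (h2 : x < u + τ) :
    ContinuousAt (fun t => F lam τ t u) x := by
  have hev : (fun t => (1 + lam * u) * Real.exp (-lam * u) *
      (lam ^ 2 * (t - u) * Real.exp (-lam * (t - u)))) =ᶠ[nhds x] fun t => F lam τ t u := by
    filter_upwards [Ioo_mem_nhds h1 h2] with t ht
    exact (Fb2 lam τ t u ht.1.le ht.2.le).symm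
  exact ContinuousAt.congr (by fun_prop) hev


/-- for `t₀ ∈ (0, Δ)`, the map `t₁ ↦ J1(t₀,t₁)` has one-sided limits at
`t₁ = Δ − t₀` and (left limit) − (right limit)
`= a · λ²(Δ−t₀)e^{−λ(Δ−t₀)} · λ²t₀e^{−λt₀} > 0`. -/
theorem stmt16 (lam Δ τ A B : ℝ) (hlam : 0 < lam) (hΔ : 0 < Δ) (hΔτ : Δ < τ)
    (t₀ : ℝ) (ht₀ : t₀ ∈ Set.Ioo (0 : ℝ) Δ) :
    ∃ L₁ L₂ : ℝ,
      Filter.Tendsto (fun t₁ => J1 lam Δ τ A B t₀ t₁)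
        (nhdsWithin (Δ - t₀) (Set.Iio (Δ - t₀))) (nhds L₁) ∧
      Filter.Tendsto (fun t₁ => J1 lam Δ τ A B t₀ t₁)
        (nhdsWithin (Δ - t₀) (Set.Ioi (Δ - t₀))) (nhds L₂) ∧
      L₁ - L₂ =
        aC lam Δ * (lam ^ 2 * (Δ - t₀) * Real.exp (-lam * (Δ - t₀))) *
          (lam ^ 2 * t₀ * Real.exp (-lam * t₀)) ∧
      0 < L₁ - L₂ := by
  obtain ⟨ht0, htΔ⟩ := ht₀
  set s₀ : ℝ := Δ - t₀ with hs₀def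
  have hs₀pos : 0 < s₀ := sub_pos.2 htΔ
  have hs₀Δ : s₀ < Δ := by simp only [hs₀def]; linarith
  set C1 : ℝ := ∫ s in (0 : ℝ)..t₀, g lam A B s * F lam τ t₀ s with hC1
  -- continuity of the first term
  have hterm1 : ContinuousAt (fun t₁ => F lam τ t₁ Δ * C1) s₀ :=
    (contF1 lam τ Δ s₀ hs₀pos hs₀Δ).mul continuousAt_const
  -- continuity of the second (integral) term
  have hterm2 : ContinuousAt
      (fun t₁ => ∫ s in t₀..Δ, F lam τ t₁ (s - t₀) * F lam τ t₀ s * g lam A B s) s₀ := by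
    apply intervalIntegral.continuousAt_of_dominated_interval
      (bound := fun _ => (1 + lam * Δ) * (lam ^ 2 * Δ) * ((1 + lam * Δ) * (lam ^ 2 * Δ)) *
        (|A| + |B| * Real.exp (2 * lam * Δ)))
    · refine Filter.Eventually.of_forall fun t₁ => ?_
      have m1 : Measurable fun s => F lam τ t₁ (s - t₀) :=
        (measurable_F lam τ t₁).comp (measurable_id.sub_const t₀)
      exact ((m1.mul (measurable_F lam τ t₀)).mul (measurable_g lam A B)).aestronglyMeasurable
    · filter_upwards [Ioo_mem_nhds hs₀pos hs₀Δ] with t₁ ht₁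
      refine Filter.Eventually.of_forall fun s hs => ?_
      rw [Set.uIoc_of_le htΔ.le] at hs
      obtain ⟨hs1, hs2⟩ := hs
      rw [Real.norm_eq_abs, abs_mul, abs_mul]
      have hst : 0 ≤ s - t₀ := by linarith
      have hA : |F lam τ t₁ (s - t₀)| ≤ (1 + lam * Δ) * (lam ^ 2 * Δ) := by
        rw [abs_of_nonneg (F_nonneg lam τ t₁ (s - t₀) hlam hst)]
        exact F_le lam τ t₁ (s - t₀) Δ Δ hlam hst (by linarith) (by linarith [ht₁.2]) hΔ.le
      have hB : |F lam τ t₀ s| ≤ (1 + lam * Δ) * (lam ^ 2 * Δ) := by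
        rw [abs_of_nonneg (F_nonneg lam τ t₀ s hlam (by linarith))]
        exact F_le lam τ t₀ s Δ Δ hlam (by linarith) hs2 htΔ.le hΔ.le
      have hC : |g lam A B s| ≤ |A| + |B| * Real.exp (2 * lam * Δ) := by
        unfold g
        refine (abs_add_le _ _).trans ?_
        rw [abs_mul, Real.abs_exp]
        have : Real.exp (2 * lam * s) ≤ Real.exp (2 * lam * Δ) :=
          Real.exp_le_exp.2 (by nlinarith)
        nlinarith [abs_nonneg B]
      have h1 : (0:ℝ) ≤ (1 + lam * Δ) * (lam ^ 2 * Δ) := by positivity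
      exact mul_le_mul (mul_le_mul hA hB (abs_nonneg _) h1) hC (abs_nonneg _)
        (by positivity)
    · exact intervalIntegrable_const
    · have hne : ∀ᵐ s : ℝ, s ≠ Δ := by simp [ae_iff]
      filter_upwards [hne] with s hsne hsmem
      rw [Set.uIoc_of_le htΔ.le] at hsmem
      have hsΔ : s < Δ := lt_of_le_of_ne hsmem.2 hsne
      have hu1 : 0 < s - t₀ := sub_pos.2 hsmem.1
      exact ((contF2 lam τ (s - t₀) s₀ (by simp only [hs₀def]; linarith)
        (by linarith)).mul continuousAt_const).mul continuousAt_const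
  set Iint : ℝ := ∫ s in t₀..Δ, F lam τ s₀ (s - t₀) * F lam τ t₀ s * g lam A B s with hIint
  -- third term, left limit
  have h3L : Filter.Tendsto (fun t₁ => aC lam Δ * F lam τ t₁ s₀ * F lam τ t₀ Δ)
      (nhdsWithin s₀ (Set.Iio s₀))
      (nhds (aC lam Δ * (lam ^ 2 * s₀ * Real.exp (-lam * s₀)) * F lam τ t₀ Δ)) := by
    have base : Filter.Tendsto
        (fun t₁ => aC lam Δ * (lam ^ 2 * t₁ * Real.exp (-lam * t₁)) * F lam τ t₀ Δ)
        (nhds s₀)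
        (nhds (aC lam Δ * (lam ^ 2 * s₀ * Real.exp (-lam * s₀)) * F lam τ t₀ Δ)) :=
      (Continuous.tendsto (by fun_prop) s₀)
    refine Filter.Tendsto.congr' ?_ (base.mono_left nhdsWithin_le_nhds)
    filter_upwards [self_mem_nhdsWithin,
      mem_nhdsWithin_of_mem_nhds (Ioi_mem_nhds hs₀pos)] with t₁ h1 h2
    rw [Fb1 lam τ t₁ s₀ h2 h1]
  -- third term, right limit (is 0)
  have h3R : Filter.Tendsto (fun t₁ => aC lam Δ * F lam τ t₁ s₀ * F lam τ t₀ Δ)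
      (nhdsWithin s₀ (Set.Ioi s₀)) (nhds 0) := by
    have base : Filter.Tendsto
        (fun t₁ => aC lam Δ * ((1 + lam * s₀) * Real.exp (-lam * s₀) *
          (lam ^ 2 * (t₁ - s₀) * Real.exp (-lam * (t₁ - s₀)))) * F lam τ t₀ Δ)
        (nhds s₀)
        (nhds (aC lam Δ * ((1 + lam * s₀) * Real.exp (-lam * s₀) *
          (lam ^ 2 * (s₀ - s₀) * Real.exp (-lam * (s₀ - s₀)))) * F lam τ t₀ Δ)) :=
      (Continuous.tendsto (by fun_prop) s₀)
    have hval : aC lam Δ * ((1 + lam * s₀) * Real.exp (-lam * s₀) *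
        (lam ^ 2 * (s₀ - s₀) * Real.exp (-lam * (s₀ - s₀)))) * F lam τ t₀ Δ = 0 := by
      simp
    rw [hval] at base
    refine Filter.Tendsto.congr' ?_ (base.mono_left nhdsWithin_le_nhds)
    filter_upwards [self_mem_nhdsWithin,
      mem_nhdsWithin_of_mem_nhds (Iio_mem_nhds (show s₀ < s₀ + τ by linarith))] with t₁ h1 h2
    rw [Fb2 lam τ t₁ s₀ (le_of_lt h1) (le_of_lt h2)]
  have hcont : Filter.Tendsto
      (fun t₁ => F lam τ t₁ Δ * C1 +
        (∫ s in t₀..Δ, F lam τ t₁ (s - t₀) * F lam τ t₀ s * g lam A B s))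
      (nhds s₀) (nhds (F lam τ s₀ Δ * C1 + Iint)) := hterm1.add hterm2
  refine ⟨F lam τ s₀ Δ * C1 + Iint +
      aC lam Δ * (lam ^ 2 * s₀ * Real.exp (-lam * s₀)) * F lam τ t₀ Δ,
    F lam τ s₀ Δ * C1 + Iint, ?_, ?_, ?_, ?_⟩
  · simp only [J1]
    exact (hcont.mono_left nhdsWithin_le_nhds).add h3L
  · simp only [J1]
    have := (hcont.mono_left nhdsWithin_le_nhds).add h3R
    rwa [add_zero] at this
  · rw [Fb1 lam τ t₀ Δ ht0 htΔ]; ring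
  · have hd : F lam τ s₀ Δ * C1 + Iint +
        aC lam Δ * (lam ^ 2 * s₀ * Real.exp (-lam * s₀)) * F lam τ t₀ Δ -
        (F lam τ s₀ Δ * C1 + Iint) =
        aC lam Δ * (lam ^ 2 * s₀ * Real.exp (-lam * s₀)) * F lam τ t₀ Δ := by ring
    rw [hd, Fb1 lam τ t₀ Δ ht0 htΔ]
    have haC : 0 < aC lam Δ := by
      unfold aC
      apply div_pos (by positivity)
      nlinarith [Real.exp_pos (2 * lam * Δ), mul_pos hlam hΔ]
    exact mul_pos (mul_pos haC (mul_pos (mul_pos (pow_pos hlam 2) hs₀pos) (Real.exp_pos _)))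
      (mul_pos (mul_pos (pow_pos hlam 2) ht0) (Real.exp_pos _))
end

section
/- Let t₀ ∈ (0, Δ). Then the one-sided limits of t₁ ↦ J_1(t₀, t₁) at t₁ = Δ exist, and (limit from below) − (limit from above) = λ²·Δ·exp(−λ·Δ) · ∫₀^{t₀} g(s) F(t₀, s) ds; if moreover g(s) > 0 for all s ∈ (0, Δ), this jump is strictly positive. Thus the joint density of two consecutive interspike intervals has a jump across the line t₁ = Δ. -/
open Real Set Filter MeasureTheory

noncomputable def psi17 (lam A B t₀ : ℝ) (t₁ s : ℝ) : ℝ :=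
  (1 + lam * (s - t₀)) * Real.exp (-lam * (s - t₀)) *
      (lam ^ 2 * (t₁ - (s - t₀)) * Real.exp (-lam * (t₁ - (s - t₀)))) *
    (lam ^ 2 * t₀ * Real.exp (-lam * t₀)) * g lam A B s

noncomputable def Phi17 (lam Δ A B t₀ t₁ : ℝ) : ℝ := ∫ s in t₀..Δ, psi17 lam A B t₀ t₁ s

lemma Phi17_cont (lam Δ A B t₀ : ℝ) : Continuous (Phi17 lam Δ A B t₀) := by
  apply intervalIntegral.continuous_parametric_intervalIntegral_of_continuous'
  unfold Function.uncurry psi17 g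
  fun_prop

noncomputable def theta17 (lam Δ t₀ t₁ : ℝ) : ℝ :=
  aC lam Δ *
      ((1 + lam * (Δ - t₀)) * Real.exp (-lam * (Δ - t₀)) *
        (lam ^ 2 * (t₁ - (Δ - t₀)) * Real.exp (-lam * (t₁ - (Δ - t₀))))) *
    (lam ^ 2 * t₀ * Real.exp (-lam * t₀))

lemma theta17_cont (lam Δ t₀ : ℝ) : Continuous (theta17 lam Δ t₀) := by
  unfold theta17; fun_prop

/-- for `t₀ ∈ (0, Δ)`, the map `t₁ ↦ J1(t₀,t₁)` has one-sided limits at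
`t₁ = Δ` and (left limit) − (right limit) `= λ²Δe^{−λΔ} · ∫₀^{t₀} g(s) F(t₀,s) ds`;
if moreover `g > 0` on `(0,Δ)`, the jump is strictly positive. -/
theorem stmt17 (lam Δ τ A B : ℝ) (hlam : 0 < lam) (hΔ : 0 < Δ) (hΔτ : Δ < τ)
    (t₀ : ℝ) (ht₀ : t₀ ∈ Set.Ioo (0 : ℝ) Δ) :
    ∃ L₁ L₂ : ℝ,
      Filter.Tendsto (fun t₁ => J1 lam Δ τ A B t₀ t₁)
        (nhdsWithin Δ (Set.Iio Δ)) (nhds L₁) ∧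
      Filter.Tendsto (fun t₁ => J1 lam Δ τ A B t₀ t₁)
        (nhdsWithin Δ (Set.Ioi Δ)) (nhds L₂) ∧
      L₁ - L₂ =
        lam ^ 2 * Δ * Real.exp (-lam * Δ) *
          ∫ s in (0 : ℝ)..t₀, g lam A B s * F lam τ t₀ s ∧
      ((∀ s ∈ Set.Ioo (0 : ℝ) Δ, 0 < g lam A B s) → 0 < L₁ - L₂) := by
  obtain ⟨ht0, htΔ⟩ := ht₀
  have hτ0 : 0 < τ := hΔ.trans hΔτ
  set C := (∫ s in (0:ℝ)..t₀, g lam A B s * F lam τ t₀ s) with hCdef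
  have hFt₀Δ : F lam τ t₀ Δ = lam ^ 2 * t₀ * Real.exp (-lam * t₀) := by
    simp only [F, if_pos (show 0 < t₀ ∧ t₀ < Δ from ⟨ht0, htΔ⟩)]
  have hmid : ∀ t₁ : ℝ, Δ - t₀ ≤ t₁ → t₁ ≤ τ →
      (∫ s in t₀..Δ, F lam τ t₁ (s - t₀) * F lam τ t₀ s * g lam A B s)
        = Phi17 lam Δ A B t₀ t₁ := by
    intro t₁ hd hτ'
    refine intervalIntegral.integral_congr_ae (MeasureTheory.ae_of_all _ fun s hs => ?_)
    rw [Set.uIoc_of_le htΔ.le] at hs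
    have hs1 : t₀ < s := hs.1
    have hs2 : s ≤ Δ := hs.2
    have hc1 : ¬(0 < t₁ ∧ t₁ < s - t₀) := fun h => by linarith [h.2]
    have hc2 : s - t₀ ≤ t₁ ∧ t₁ ≤ s - t₀ + τ := ⟨by linarith, by linarith⟩
    have hF2 : F lam τ t₀ s = lam ^ 2 * t₀ * Real.exp (-lam * t₀) := by
      simp only [F, if_pos (show 0 < t₀ ∧ t₀ < s from ⟨ht0, hs1⟩)]
    simp only [F, if_neg hc1, if_pos hc2] at hF2 ⊢
    rw [hF2, psi17]
  have hthird : ∀ t₁ : ℝ, Δ - t₀ ≤ t₁ → t₁ ≤ τ →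
      aC lam Δ * F lam τ t₁ (Δ - t₀) * F lam τ t₀ Δ = theta17 lam Δ t₀ t₁ := by
    intro t₁ hd hτ'
    have hc1 : ¬(0 < t₁ ∧ t₁ < Δ - t₀) := fun h => by linarith [h.2]
    have hc2 : Δ - t₀ ≤ t₁ ∧ t₁ ≤ Δ - t₀ + τ := ⟨hd, by linarith⟩
    rw [hFt₀Δ]
    simp only [F, if_neg hc1, if_pos hc2, theta17]
  have hf₁c : Continuous (fun t₁ : ℝ =>
      lam ^ 2 * t₁ * Real.exp (-lam * t₁) * C + Phi17 lam Δ A B t₀ t₁ + theta17 lam Δ t₀ t₁) :=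
    ((by fun_prop : Continuous fun t₁ : ℝ => lam ^ 2 * t₁ * Real.exp (-lam * t₁) * C).add
      (Phi17_cont lam Δ A B t₀)).add (theta17_cont lam Δ t₀)
  have hf₂c : Continuous (fun t₁ : ℝ =>
      (1 + lam * Δ) * Real.exp (-lam * Δ) *
          (lam ^ 2 * (t₁ - Δ) * Real.exp (-lam * (t₁ - Δ))) * C
        + Phi17 lam Δ A B t₀ t₁ + theta17 lam Δ t₀ t₁) :=
    ((by fun_prop : Continuous fun t₁ : ℝ => (1 + lam * Δ) * Real.exp (-lam * Δ) *
        (lam ^ 2 * (t₁ - Δ) * Real.exp (-lam * (t₁ - Δ))) * C).add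
      (Phi17_cont lam Δ A B t₀)).add (theta17_cont lam Δ t₀)
  refine ⟨lam ^ 2 * Δ * Real.exp (-lam * Δ) * C + Phi17 lam Δ A B t₀ Δ + theta17 lam Δ t₀ Δ,
    (1 + lam * Δ) * Real.exp (-lam * Δ) * (lam ^ 2 * (Δ - Δ) * Real.exp (-lam * (Δ - Δ))) * C
      + Phi17 lam Δ A B t₀ Δ + theta17 lam Δ t₀ Δ, ?_, ?_, ?_, ?_⟩
  · refine Filter.Tendsto.congr' ?_ ((hf₁c.tendsto Δ).mono_left nhdsWithin_le_nhds)
    filter_upwards [Ioo_mem_nhdsLT_of_mem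
      (show Δ ∈ Set.Ioc (max (Δ - t₀) 0) Δ from ⟨max_lt (by linarith) hΔ, le_refl Δ⟩)]
      with t₁ ht₁
    have h0 : 0 < t₁ := lt_of_le_of_lt (le_max_right _ _) ht₁.1
    have hd : Δ - t₀ ≤ t₁ := (le_max_left _ _).trans ht₁.1.le
    have hτ' : t₁ ≤ τ := by linarith [ht₁.2]
    have hFΔ : F lam τ t₁ Δ = lam ^ 2 * t₁ * Real.exp (-lam * t₁) := by
      simp only [F, if_pos (show 0 < t₁ ∧ t₁ < Δ from ⟨h0, ht₁.2⟩)]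
    rw [J1, hmid t₁ hd hτ', hthird t₁ hd hτ', hFΔ]
  · refine Filter.Tendsto.congr' ?_ ((hf₂c.tendsto Δ).mono_left nhdsWithin_le_nhds)
    filter_upwards [Ioo_mem_nhdsGT_of_mem
      (show Δ ∈ Set.Ico Δ τ from ⟨le_refl Δ, hΔτ⟩)] with t₁ ht₁
    have hd : Δ - t₀ ≤ t₁ := by linarith [ht₁.1]
    have hτ' : t₁ ≤ τ := ht₁.2.le
    have hc1 : ¬(0 < t₁ ∧ t₁ < Δ) := fun h => absurd h.2 (not_lt.2 ht₁.1.le)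
    have hc2 : Δ ≤ t₁ ∧ t₁ ≤ Δ + τ := ⟨ht₁.1.le, by linarith⟩
    have hFΔ : F lam τ t₁ Δ = (1 + lam * Δ) * Real.exp (-lam * Δ) *
        (lam ^ 2 * (t₁ - Δ) * Real.exp (-lam * (t₁ - Δ))) := by
      simp only [F, if_neg hc1, if_pos hc2]
    rw [J1, hmid t₁ hd hτ', hthird t₁ hd hτ', hFΔ]
  · ring
  · intro hg
    have hC : 0 < C := by
      have hcongr : (∫ s in (0:ℝ)..t₀, g lam A B s * F lam τ t₀ s)
          = ∫ s in (0:ℝ)..t₀, g lam A B s * ((1 + lam * s) * Real.exp (-lam * s) *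
              (lam ^ 2 * (t₀ - s) * Real.exp (-lam * (t₀ - s)))) := by
        refine intervalIntegral.integral_congr_ae (MeasureTheory.ae_of_all _ fun s hs => ?_)
        rw [Set.uIoc_of_le ht0.le] at hs
        have hc1 : ¬(0 < t₀ ∧ t₀ < s) := fun h => by linarith [h.2, hs.2]
        have hc2 : s ≤ t₀ ∧ t₀ ≤ s + τ := ⟨hs.2, by linarith [hs.1]⟩
        simp only [F, if_neg hc1, if_pos hc2]
      rw [hCdef, hcongr]
      refine intervalIntegral.intervalIntegral_pos_of_pos_on ?_ ?_ ht0
      · apply Continuous.intervalIntegrable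
        unfold g; fun_prop
      · intro s hs
        have hgs := hg s ⟨hs.1, hs.2.trans htΔ⟩
        have h1 : 0 < 1 + lam * s := by nlinarith [hs.1]
        have h2 : 0 < t₀ - s := by linarith [hs.2]
        exact mul_pos hgs (mul_pos (mul_pos h1 (Real.exp_pos _))
          (mul_pos (mul_pos (pow_pos hlam 2) h2) (Real.exp_pos _)))
    have : (0:ℝ) < lam ^ 2 * Δ * Real.exp (-lam * Δ) * C :=
      mul_pos (mul_pos (mul_pos (pow_pos hlam 2) hΔ) (Real.exp_pos _)) hC
    nlinarith [this]
end
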